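/- arXiv:1501.00516 — 4 statements merged into one kernel-verified Lean document; each statement's English description precedes it below -/
import Mathlib

section
/- Let G be the Cayley graph of the symmetric group S_n (n ≥ 3) with the set of all transpositions as generators. Then Ric(G) = 2: for every f:S_n→ℝ and every x∈S_n, Γ₂(f)(x) ≥ 2·Γ(f)(x), and 2 is the largest constant with this property. -/
noncomputable section
open Matrix

/-- The graph Laplacian: `Δ f (x) = Σ_{y ~ x} (f y - f x)`. -/
def lap {V : Type*} (G : SimpleGraph V) (f : V → ℝ) (x : V) : ℝ :=
  ∑ᶠ y ∈ {y | G.Adj x y}, (f y - f x)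

/-- The carré du champ `Γ(f,g)(x) = (1/2) Σ_{y ~ x} (f x - f y)(g x - g y)`. -/
def gam {V : Type*} (G : SimpleGraph V) (f g : V → ℝ) (x : V) : ℝ :=
  (1/2) * ∑ᶠ y ∈ {y | G.Adj x y}, (f x - f y) * (g x - g y)

/-- The iterated carré du champ `Γ₂(f) = (1/2) Δ Γ(f) - Γ(f, Δ f)`. -/
def gam2 {V : Type*} (G : SimpleGraph V) (f : V → ℝ) (x : V) : ℝ :=
  (1/2) * lap G (gam G f f) x - gam G f (lap G f) x

/-- `Ric(G) ≥ K` : the Bochner inequality `Γ₂(f)(x) ≥ K Γ(f)(x)` holds for all `f, x`. -/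
def RicGE {V : Type*} (G : SimpleGraph V) (K : ℝ) : Prop :=
  ∀ (f : V → ℝ) (x : V), K * gam G f f x ≤ gam2 G f x

/-- The Cayley graph of the symmetric group with all transpositions as generators:
`x ~ y` iff `x⁻¹ * y` is a transposition. -/
def transpositionGraph (n : ℕ) : SimpleGraph (Equiv.Perm (Fin n)) where
  Adj x y := (x⁻¹ * y).IsSwap
  symm := by
    constructor
    rintro x y ⟨a, b, hab, hf⟩
    refine ⟨a, b, hab, ?_⟩
    have h : (x⁻¹ * y)⁻¹ = Equiv.swap a b := by rw [hf, Equiv.swap_inv]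
    simpa [_root_.mul_inv_rev] using h
  loopless := by
    constructor
    rintro x ⟨a, b, hab, hf⟩
    rw [inv_mul_cancel] at hf
    exact hab (by
      have := congrArg (fun e : Equiv.Perm (Fin n) => e a) hf
      simpa [Equiv.swap_apply_left] using this)

section Aux
open Equiv Finset
variable {n : ℕ}

open scoped Classical in
def swapsT (n : ℕ) : Finset (Perm (Fin n)) :=
  Finset.univ.filter (fun σ => σ.IsSwap)

lemma mem_swapsT {σ : Perm (Fin n)} : σ ∈ swapsT n ↔ σ.IsSwap := by
  classical
  simp [swapsT]

lemma neighborSet_eq (x : Perm (Fin n)) :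
    {y | (transpositionGraph n).Adj x y} = ↑((swapsT n).image (fun s => x * s)) := by
  ext y
  simp only [Set.mem_setOf_eq, coe_image, Set.mem_image, mem_coe, mem_swapsT]
  constructor
  · intro h; exact ⟨x⁻¹ * y, h, by group⟩
  · rintro ⟨s, hs, rfl⟩; simpa [transpositionGraph] using hs

lemma lap_eq (f : Perm (Fin n) → ℝ) (x : Perm (Fin n)) :
    lap (transpositionGraph n) f x = ∑ s ∈ swapsT n, (f (x * s) - f x) := by
  rw [lap, neighborSet_eq, finsum_mem_coe_finset, Finset.sum_image]
  intro a _ b _ h; exact mul_left_cancel h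

lemma gam_eq (f g : Perm (Fin n) → ℝ) (x : Perm (Fin n)) :
    gam (transpositionGraph n) f g x
      = (1/2) * ∑ s ∈ swapsT n, (f x - f (x * s)) * (g x - g (x * s)) := by
  rw [gam, neighborSet_eq, finsum_mem_coe_finset, Finset.sum_image]
  intro a _ b _ h; exact mul_left_cancel h

lemma inner_id {β : Type*} (T : Finset β) (a b u w : β → ℝ) (r : ℝ) :
    ((1/2) * ∑ t ∈ T, a t - (1/2) * ∑ t ∈ T, b t) - r * (∑ t ∈ T, u t - ∑ t ∈ T, w t)
    = (1/2) * ∑ t ∈ T, (a t - b t - 2 * r * (u t - w t)) := by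
  calc ((1/2) * ∑ t ∈ T, a t - (1/2) * ∑ t ∈ T, b t) - r * (∑ t ∈ T, u t - ∑ t ∈ T, w t)
      = (∑ t ∈ T, (1/2) * a t - ∑ t ∈ T, (1/2) * b t)
          - (∑ t ∈ T, r * u t - ∑ t ∈ T, r * w t) := by
        rw [Finset.mul_sum, Finset.mul_sum, mul_sub, Finset.mul_sum, Finset.mul_sum]
    _ = ∑ t ∈ T, ((1/2) * a t - (1/2) * b t - (r * u t - r * w t)) := by
        rw [← Finset.sum_sub_distrib, ← Finset.sum_sub_distrib, ← Finset.sum_sub_distrib]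
    _ = (1/2) * ∑ t ∈ T, (a t - b t - 2 * r * (u t - w t)) := by
        rw [Finset.mul_sum]
        exact Finset.sum_congr rfl fun t _ => by ring

lemma gam2_eq (f : Perm (Fin n) → ℝ) (x : Perm (Fin n)) :
    gam2 (transpositionGraph n) f x
      = (1/4) * ∑ s ∈ swapsT n, ∑ t ∈ swapsT n,
          ((f (x*s*t) - f x - 2*(f (x*s) - f x))^2
            - ((f (x*s) - f x) - (f (x*t) - f x))^2) := by
  rw [gam2, lap_eq, gam_eq]
  simp only [gam_eq, lap_eq]
  rw [← mul_sub, ← Finset.sum_sub_distrib]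
  have h1 : ∀ s ∈ swapsT n,
      ((1/2) * ∑ t ∈ swapsT n, (f (x*s) - f (x*s*t)) * (f (x*s) - f (x*s*t))
        - (1/2) * ∑ t ∈ swapsT n, (f x - f (x*t)) * (f x - f (x*t)))
      - (f x - f (x*s)) * (∑ t ∈ swapsT n, (f (x*t) - f x)
          - ∑ t ∈ swapsT n, (f (x*s*t) - f (x*s)))
      = (1/2) * ∑ t ∈ swapsT n,
          ((f (x*s*t) - f x - 2*(f (x*s) - f x))^2
            - ((f (x*s) - f x) - (f (x*t) - f x))^2) := by
    intro s _
    rw [inner_id]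
    rw [Finset.mul_sum, Finset.mul_sum]
    exact Finset.sum_congr rfl fun t _ => by ring
  calc (1/2) * ∑ s ∈ swapsT n,
        (((1/2) * ∑ t ∈ swapsT n, (f (x*s) - f (x*s*t)) * (f (x*s) - f (x*s*t))
          - (1/2) * ∑ t ∈ swapsT n, (f x - f (x*t)) * (f x - f (x*t)))
        - (f x - f (x*s)) * (∑ t ∈ swapsT n, (f (x*t) - f x)
            - ∑ t ∈ swapsT n, (f (x*s*t) - f (x*s))))
      = (1/2) * ∑ s ∈ swapsT n, ((1/2) * ∑ t ∈ swapsT n,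
          ((f (x*s*t) - f x - 2*(f (x*s) - f x))^2
            - ((f (x*s) - f x) - (f (x*t) - f x))^2)) := by
        rw [Finset.sum_congr rfl h1]
    _ = (1/4) * ∑ s ∈ swapsT n, ∑ t ∈ swapsT n,
          ((f (x*s*t) - f x - 2*(f (x*s) - f x))^2
            - ((f (x*s) - f x) - (f (x*t) - f x))^2) := by
        rw [← Finset.mul_sum, ← mul_assoc]; norm_num

noncomputable def offP (n : ℕ) : Finset (Perm (Fin n) × Perm (Fin n)) :=
  ((swapsT n) ×ˢ (swapsT n)).filter (fun q => q.1 ≠ q.2)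

lemma mem_offP {q : Perm (Fin n) × Perm (Fin n)} :
    q ∈ offP n ↔ q.1.IsSwap ∧ q.2.IsSwap ∧ q.1 ≠ q.2 := by
  simp [offP, Finset.mem_filter, Finset.mem_product, mem_swapsT, and_assoc]

lemma isSwap_eq_swap {σ : Perm (Fin n)} (h : σ.IsSwap) {a b : Fin n}
    (hab : a ≠ b) (hσa : σ a = b) : σ = Equiv.swap a b := by
  obtain ⟨c, d, hcd, rfl⟩ := h
  rcases eq_or_ne a c with rfl | hac
  · rw [Equiv.swap_apply_left] at hσa; rw [hσa]
  · rcases eq_or_ne a d with rfl | had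
    · rw [Equiv.swap_apply_right] at hσa; rw [hσa, Equiv.swap_comm]
    · rw [Equiv.swap_apply_of_ne_of_ne hac had] at hσa
      exact absurd hσa hab

lemma perm_ne_of_apply_ne {σ τ : Perm (Fin n)} (x : Fin n) (h : σ x ≠ τ x) : σ ≠ τ :=
  fun e => h (e ▸ rfl)

lemma swap_prod_1 {i j k : Fin n} (hij : i ≠ j) (hjk : j ≠ k) (hik : i ≠ k) :
    Equiv.swap j k * Equiv.swap i k = Equiv.swap i j * Equiv.swap j k := by
  ext x
  simp only [Equiv.Perm.mul_apply, Equiv.swap_apply_def]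
  split_ifs <;> simp_all

lemma swap_prod_2 {i j k : Fin n} (hij : i ≠ j) (hjk : j ≠ k) (hik : i ≠ k) :
    Equiv.swap i k * Equiv.swap i j = Equiv.swap i j * Equiv.swap j k := by
  ext x
  simp only [Equiv.Perm.mul_apply, Equiv.swap_apply_def]
  split_ifs <;> simp_all

lemma swap_prod_3 {i j k l : Fin n} (hik : i ≠ k) (hil : i ≠ l) (hjk : j ≠ k) (hjl : j ≠ l) :
    Equiv.swap k l * Equiv.swap i j = Equiv.swap i j * Equiv.swap k l := by
  ext x
  simp only [Equiv.Perm.mul_apply, Equiv.swap_apply_def]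
  split_ifs <;> simp_all

lemma fiber3 {i j k : Fin n} (hij : i ≠ j) (hjk : j ≠ k) (hik : i ≠ k) :
    (offP n).filter (fun q => q.1 * q.2 = Equiv.swap i j * Equiv.swap j k)
    = {(Equiv.swap i j, Equiv.swap j k), (Equiv.swap j k, Equiv.swap i k),
       (Equiv.swap i k, Equiv.swap i j)} := by
  have pfix : ∀ c : Fin n, c ≠ i → c ≠ j → c ≠ k →
      (Equiv.swap i j * Equiv.swap j k) c = c := by
    intro c hci hcj hck
    simp [Equiv.Perm.mul_apply, Equiv.swap_apply_of_ne_of_ne, hci, hcj, hck]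
  have pne1 : (Equiv.swap i j * Equiv.swap j k) ≠ 1 := by
    apply perm_ne_of_apply_ne i
    simp only [Equiv.Perm.mul_apply, Equiv.Perm.one_apply]
    rw [Equiv.swap_apply_of_ne_of_ne hij hik, Equiv.swap_apply_left]
    exact hij.symm
  ext q
  simp only [Finset.mem_filter, mem_offP, Finset.mem_insert, Finset.mem_singleton]
  constructor
  · rintro ⟨⟨hs1, hs2, hne⟩, hprod⟩
    -- q.2 = q.1 * p since q.1 is an involution
    obtain ⟨a, b, hab, h1⟩ := hs1
    have hq2 : q.2 = q.1 * (Equiv.swap i j * Equiv.swap j k) := by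
      rw [← hprod, ← mul_assoc, h1, Equiv.swap_mul_self, one_mul]
    -- points moved by q.1 are in {i,j,k}
    have key : ∀ c d : Fin n, c ≠ d → q.1 = Equiv.swap c d → (c = i ∨ c = j ∨ c = k) := by
      intro c d hcd h1'
      by_contra hc
      push_neg at hc
      have hq2c : q.2 c = d := by
        rw [hq2, Equiv.Perm.mul_apply, pfix c hc.1 hc.2.1 hc.2.2, h1',
          Equiv.swap_apply_left]
      have : q.2 = Equiv.swap c d := isSwap_eq_swap hs2 hcd hq2c
      exact hne (by rw [h1', this])
    have ha : a = i ∨ a = j ∨ a = k := key a b hab h1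
    have hb : b = i ∨ b = j ∨ b = k := key b a hab.symm (by rw [h1, Equiv.swap_comm])
    -- determine q.1 among the three swaps
    have hq1 : q.1 = Equiv.swap i j ∨ q.1 = Equiv.swap j k ∨ q.1 = Equiv.swap i k := by
      rcases ha with ha | ha | ha <;> rcases hb with hb | hb | hb
      · exact absurd (ha.trans hb.symm) hab
      · exact Or.inl (by rw [h1, ha, hb])
      · exact Or.inr (Or.inr (by rw [h1, ha, hb]))
      · exact Or.inl (by rw [h1, ha, hb]; exact Equiv.swap_comm _ _)
      · exact absurd (ha.trans hb.symm) hab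
      · exact Or.inr (Or.inl (by rw [h1, ha, hb]))
      · exact Or.inr (Or.inr (by rw [h1, ha, hb]; exact Equiv.swap_comm _ _))
      · exact Or.inr (Or.inl (by rw [h1, ha, hb]; exact Equiv.swap_comm _ _))
      · exact absurd (ha.trans hb.symm) hab
    rcases hq1 with h | h | h
    · left
      have : q.2 = Equiv.swap j k := by
        rw [hq2, h, ← mul_assoc, Equiv.swap_mul_self, one_mul]
      exact Prod.ext h this
    · right; left
      have : q.2 = Equiv.swap i k := by
        rw [hq2, h, ← swap_prod_1 hij hjk hik, ← mul_assoc, Equiv.swap_mul_self, one_mul]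
      exact Prod.ext h this
    · right; right
      have : q.2 = Equiv.swap i j := by
        rw [hq2, h, ← swap_prod_2 hij hjk hik, ← mul_assoc, Equiv.swap_mul_self, one_mul]
      exact Prod.ext h this
  · intro h
    have ne1 : Equiv.swap i j ≠ Equiv.swap j k := by
      apply perm_ne_of_apply_ne i
      rw [Equiv.swap_apply_left, Equiv.swap_apply_of_ne_of_ne hij hik]
      exact hij.symm
    have ne2 : Equiv.swap j k ≠ Equiv.swap i k := by
      apply perm_ne_of_apply_ne j
      rw [Equiv.swap_apply_left, Equiv.swap_apply_of_ne_of_ne hij.symm hjk]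
      exact hjk.symm
    have ne3 : Equiv.swap i k ≠ Equiv.swap i j := by
      apply perm_ne_of_apply_ne k
      rw [Equiv.swap_apply_right, Equiv.swap_apply_of_ne_of_ne hik.symm hjk.symm]
      exact hik
    rcases h with rfl | rfl | rfl
    · exact ⟨⟨⟨i, j, hij, rfl⟩, ⟨j, k, hjk, rfl⟩, ne1⟩, rfl⟩
    · exact ⟨⟨⟨j, k, hjk, rfl⟩, ⟨i, k, hik, rfl⟩, ne2⟩, swap_prod_1 hij hjk hik⟩
    · exact ⟨⟨⟨i, k, hik, rfl⟩, ⟨i, j, hij, rfl⟩, ne3⟩, swap_prod_2 hij hjk hik⟩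

lemma fiber2 {i j k l : Fin n} (hij : i ≠ j) (hik : i ≠ k) (hil : i ≠ l)
    (hjk : j ≠ k) (hjl : j ≠ l) (hkl : k ≠ l) :
    (offP n).filter (fun q => q.1 * q.2 = Equiv.swap i j * Equiv.swap k l)
    = {(Equiv.swap i j, Equiv.swap k l), (Equiv.swap k l, Equiv.swap i j)} := by
  have hpi : (Equiv.swap i j * Equiv.swap k l) i = j := by
    rw [Equiv.Perm.mul_apply, Equiv.swap_apply_of_ne_of_ne hik hil, Equiv.swap_apply_left]
  have hpj : (Equiv.swap i j * Equiv.swap k l) j = i := by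
    rw [Equiv.Perm.mul_apply, Equiv.swap_apply_of_ne_of_ne hjk hjl, Equiv.swap_apply_right]
  have hpk : (Equiv.swap i j * Equiv.swap k l) k = l := by
    rw [Equiv.Perm.mul_apply, Equiv.swap_apply_left,
      Equiv.swap_apply_of_ne_of_ne hil.symm hjl.symm]
  have hpl : (Equiv.swap i j * Equiv.swap k l) l = k := by
    rw [Equiv.Perm.mul_apply, Equiv.swap_apply_right,
      Equiv.swap_apply_of_ne_of_ne hik.symm hjk.symm]
  have pfix : ∀ c : Fin n, c ≠ i → c ≠ j → c ≠ k → c ≠ l →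
      (Equiv.swap i j * Equiv.swap k l) c = c := by
    intro c h1 h2 h3 h4
    rw [Equiv.Perm.mul_apply, Equiv.swap_apply_of_ne_of_ne h3 h4,
      Equiv.swap_apply_of_ne_of_ne h1 h2]
  ext q
  simp only [Finset.mem_filter, mem_offP, Finset.mem_insert, Finset.mem_singleton]
  constructor
  · rintro ⟨⟨hs1, hs2, hne⟩, hprod⟩
    obtain ⟨a, b, hab, h1⟩ := hs1
    have hq2 : q.2 = q.1 * (Equiv.swap i j * Equiv.swap k l) := by
      rw [← hprod, ← mul_assoc, h1, Equiv.swap_mul_self, one_mul]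
    have key : ∀ c d : Fin n, c ≠ d → q.1 = Equiv.swap c d →
        (c = i ∨ c = j ∨ c = k ∨ c = l) := by
      intro c d hcd h1'
      by_contra hc
      push_neg at hc
      have hq2c : q.2 c = d := by
        rw [hq2, Equiv.Perm.mul_apply, pfix c hc.1 hc.2.1 hc.2.2.1 hc.2.2.2, h1',
          Equiv.swap_apply_left]
      have : q.2 = Equiv.swap c d := isSwap_eq_swap hs2 hcd hq2c
      exact hne (by rw [h1', this])
    have ha : a = i ∨ a = j ∨ a = k ∨ a = l := key a b hab h1
    have hb : b = i ∨ b = j ∨ b = k ∨ b = l := key b a hab.symm (by rw [h1, Equiv.swap_comm])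
    have hq1 : q.1 = Equiv.swap i j ∨ q.1 = Equiv.swap k l ∨ q.1 = Equiv.swap i k ∨
        q.1 = Equiv.swap i l ∨ q.1 = Equiv.swap j k ∨ q.1 = Equiv.swap j l := by
      have comm : ∀ c d : Fin n, q.1 = Equiv.swap c d → q.1 = Equiv.swap d c := by
        intro c d h'; rw [h']; exact Equiv.swap_comm _ _
      have h1' : q.1 = Equiv.swap a b := h1
      rcases ha with ha | ha | ha | ha <;> rcases hb with hb | hb | hb | hb <;>
        rw [ha, hb] at h1'
      · exact absurd (ha.trans hb.symm) hab
      · exact Or.inl h1'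
      · exact Or.inr (Or.inr (Or.inl h1'))
      · exact Or.inr (Or.inr (Or.inr (Or.inl h1')))
      · exact Or.inl (comm _ _ h1')
      · exact absurd (ha.trans hb.symm) hab
      · exact Or.inr (Or.inr (Or.inr (Or.inr (Or.inl h1'))))
      · exact Or.inr (Or.inr (Or.inr (Or.inr (Or.inr h1'))))
      · exact Or.inr (Or.inr (Or.inl (comm _ _ h1')))
      · exact Or.inr (Or.inr (Or.inr (Or.inr (Or.inl (comm _ _ h1')))))
      · exact absurd (ha.trans hb.symm) hab
      · exact Or.inr (Or.inl h1')
      · exact Or.inr (Or.inr (Or.inr (Or.inl (comm _ _ h1'))))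
      · exact Or.inr (Or.inr (Or.inr (Or.inr (Or.inr (comm _ _ h1')))))
      · exact Or.inr (Or.inl (comm _ _ h1'))
      · exact absurd (ha.trans hb.symm) hab
    rcases hq1 with h | h | h | h | h | h
    · left
      have : q.2 = Equiv.swap k l := by
        rw [hq2, h, ← mul_assoc, Equiv.swap_mul_self, one_mul]
      exact Prod.ext h this
    · right
      have : q.2 = Equiv.swap i j := by
        rw [hq2, h, ← swap_prod_3 hik hil hjk hjl, ← mul_assoc, Equiv.swap_mul_self, one_mul]
      exact Prod.ext h this
    · exfalso
      have e1 : q.2 i = j := by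
        rw [hq2, Equiv.Perm.mul_apply, hpi, h, Equiv.swap_apply_of_ne_of_ne hij.symm hjk]
      have e2 : q.2 = Equiv.swap i j := isSwap_eq_swap hs2 hij e1
      have e3 : q.2 j = k := by
        rw [hq2, Equiv.Perm.mul_apply, hpj, h, Equiv.swap_apply_left]
      rw [e2, Equiv.swap_apply_right] at e3
      exact hik e3
    · exfalso
      have e1 : q.2 i = j := by
        rw [hq2, Equiv.Perm.mul_apply, hpi, h, Equiv.swap_apply_of_ne_of_ne hij.symm hjl]
      have e2 : q.2 = Equiv.swap i j := isSwap_eq_swap hs2 hij e1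
      have e3 : q.2 j = l := by
        rw [hq2, Equiv.Perm.mul_apply, hpj, h, Equiv.swap_apply_left]
      rw [e2, Equiv.swap_apply_right] at e3
      exact hil e3
    · exfalso
      have e1 : q.2 i = k := by
        rw [hq2, Equiv.Perm.mul_apply, hpi, h, Equiv.swap_apply_left]
      have e2 : q.2 = Equiv.swap i k := isSwap_eq_swap hs2 hik e1
      have e3 : q.2 k = l := by
        rw [hq2, Equiv.Perm.mul_apply, hpk, h, Equiv.swap_apply_of_ne_of_ne hjl.symm hkl.symm]
      rw [e2, Equiv.swap_apply_right] at e3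
      exact hil e3
    · exfalso
      have e1 : q.2 i = l := by
        rw [hq2, Equiv.Perm.mul_apply, hpi, h, Equiv.swap_apply_left]
      have e2 : q.2 = Equiv.swap i l := isSwap_eq_swap hs2 hil e1
      have e3 : q.2 l = k := by
        rw [hq2, Equiv.Perm.mul_apply, hpl, h, Equiv.swap_apply_of_ne_of_ne hjk.symm hkl]
      rw [e2, Equiv.swap_apply_right] at e3
      exact hik e3
  · intro h
    have ne1 : Equiv.swap i j ≠ Equiv.swap k l := by
      apply perm_ne_of_apply_ne i
      rw [Equiv.swap_apply_left, Equiv.swap_apply_of_ne_of_ne hik hil]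
      exact hij.symm
    rcases h with rfl | rfl
    · exact ⟨⟨⟨i, j, hij, rfl⟩, ⟨k, l, hkl, rfl⟩, ne1⟩, rfl⟩
    · exact ⟨⟨⟨k, l, hkl, rfl⟩, ⟨i, j, hij, rfl⟩, ne1.symm⟩, swap_prod_3 hik hil hjk hjl⟩

lemma fiber3_sum_nonneg {i j k : Fin n} (hij : i ≠ j) (hjk : j ≠ k) (hik : i ≠ k)
    (w : Perm (Fin n) → ℝ) :
    0 ≤ ∑ q ∈ (offP n).filter
          (fun q => q.1 * q.2 = Equiv.swap i j * Equiv.swap j k),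
        ((w (q.1*q.2) - 2 * w q.1)^2 - (w q.1 - w q.2)^2) := by
  classical
  rw [fiber3 hij hjk hik]
  have d12 : Equiv.swap i j ≠ Equiv.swap j k := by
    apply perm_ne_of_apply_ne i
    rw [Equiv.swap_apply_left, Equiv.swap_apply_of_ne_of_ne hij hik]
    exact hij.symm
  have d13 : Equiv.swap i j ≠ Equiv.swap i k := by
    apply perm_ne_of_apply_ne j
    rw [Equiv.swap_apply_right, Equiv.swap_apply_of_ne_of_ne hij.symm hjk]
    exact hij
  have d23 : Equiv.swap j k ≠ Equiv.swap i k := by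
    apply perm_ne_of_apply_ne j
    rw [Equiv.swap_apply_left, Equiv.swap_apply_of_ne_of_ne hij.symm hjk]
    exact hjk.symm
  rw [Finset.sum_insert (by simp [Prod.ext_iff, d12, d13]),
    Finset.sum_insert (by simp [Prod.ext_iff, d23]), Finset.sum_singleton]
  simp only
  rw [swap_prod_1 hij hjk hik, swap_prod_2 hij hjk hik]
  nlinarith [sq_nonneg (3 * w (Equiv.swap i j * Equiv.swap j k)
      - 2 * (w (Equiv.swap i j) + w (Equiv.swap j k) + w (Equiv.swap i k))),
    sq_nonneg (w (Equiv.swap i j) - w (Equiv.swap j k)),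
    sq_nonneg (w (Equiv.swap j k) - w (Equiv.swap i k)),
    sq_nonneg (w (Equiv.swap i k) - w (Equiv.swap i j))]

lemma fiber2_sum_nonneg {i j k l : Fin n} (hij : i ≠ j) (hik : i ≠ k) (hil : i ≠ l)
    (hjk : j ≠ k) (hjl : j ≠ l) (hkl : k ≠ l) (w : Perm (Fin n) → ℝ) :
    0 ≤ ∑ q ∈ (offP n).filter
          (fun q => q.1 * q.2 = Equiv.swap i j * Equiv.swap k l),
        ((w (q.1*q.2) - 2 * w q.1)^2 - (w q.1 - w q.2)^2) := by
  classical
  rw [fiber2 hij hik hil hjk hjl hkl]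
  have d12 : Equiv.swap i j ≠ Equiv.swap k l := by
    apply perm_ne_of_apply_ne i
    rw [Equiv.swap_apply_left, Equiv.swap_apply_of_ne_of_ne hik hil]
    exact hij.symm
  rw [Finset.sum_insert (by simp [Prod.ext_iff, d12]), Finset.sum_singleton]
  simp only
  rw [swap_prod_3 hik hil hjk hjl]
  nlinarith [sq_nonneg (w (Equiv.swap i j * Equiv.swap k l)
      - w (Equiv.swap i j) - w (Equiv.swap k l))]

lemma offP_sum_nonneg (w : Perm (Fin n) → ℝ) :
    0 ≤ ∑ q ∈ offP n, ((w (q.1*q.2) - 2 * w q.1)^2 - (w q.1 - w q.2)^2) := by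
  classical
  rw [← Finset.sum_fiberwise_of_maps_to (g := fun q => q.1*q.2)
      (t := (offP n).image (fun q => q.1*q.2))
      (fun q hq => Finset.mem_image_of_mem _ hq)]
  apply Finset.sum_nonneg
  intro p hp
  obtain ⟨q0, hq0, hq0p⟩ := Finset.mem_image.1 hp
  obtain ⟨hs1, hs2, hne⟩ := mem_offP.1 hq0
  obtain ⟨a, b, hab, h1⟩ := hs1
  obtain ⟨c, d, hcd, h2⟩ := hs2
  have hp' : p = Equiv.swap a b * Equiv.swap c d := by rw [← hq0p, h1, h2]
  rw [hp']
  by_cases hdb : d = b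
  · -- t = swap c b, common point b
    have hca : c ≠ a := by
      intro hc
      exact hne (by rw [h1, h2, hc, hdb])
    have hcb : c ≠ b := fun h => hcd (h.trans hdb.symm)
    rw [hdb, show Equiv.swap c b = Equiv.swap b c from Equiv.swap_comm c b]
    exact fiber3_sum_nonneg hab hcb.symm (Ne.symm hca) w
  · by_cases hda : d = a
    · have hcb : c ≠ b := by
        intro hc
        exact hne (by rw [h1, h2, hc, hda, Equiv.swap_comm])
      have hca : c ≠ a := fun h => hcd (h.trans hda.symm)
      rw [hda, show Equiv.swap a b = Equiv.swap b a from Equiv.swap_comm a b,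
        show Equiv.swap c a = Equiv.swap a c from Equiv.swap_comm c a]
      exact fiber3_sum_nonneg hab.symm hca.symm hcb.symm w
    · by_cases hca : c = a
      · rw [hca, show Equiv.swap a b = Equiv.swap b a from Equiv.swap_comm a b]
        exact fiber3_sum_nonneg hab.symm (fun h => hcd (hca.trans h))
          (fun h => hdb h.symm) w
      · by_cases hcb : c = b
        · rw [hcb]
          exact fiber3_sum_nonneg hab (fun h => hcd (hcb.trans h))
            (fun h => hda h.symm) w
        · exact fiber2_sum_nonneg hab (Ne.symm hca) (fun h => hda h.symm)
            (Ne.symm hcb) (fun h => hdb h.symm) hcd w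


lemma swap_ne_one' {a b : Fin n} (h : a ≠ b) : Equiv.swap a b ≠ 1 := by
  apply perm_ne_of_apply_ne a
  rw [Equiv.swap_apply_left, Equiv.Perm.one_apply]
  exact h.symm

lemma gam2_decomp (f : Perm (Fin n) → ℝ) (x : Perm (Fin n)) :
    gam2 (transpositionGraph n) f x
      = 2 * gam (transpositionGraph n) f f x
        + (1/4) * ∑ q ∈ offP n,
            ((f (x*(q.1*q.2)) - f x - 2*(f (x*q.1) - f x))^2
              - ((f (x*q.1) - f x) - (f (x*q.2) - f x))^2) := by
  classical
  set w : Perm (Fin n) → ℝ := fun p => f (x*p) - f x with hw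
  have h2 : gam2 (transpositionGraph n) f x
      = (1/4) * ∑ q ∈ (swapsT n) ×ˢ (swapsT n),
          ((w (q.1*q.2) - 2*w q.1)^2 - (w q.1 - w q.2)^2) := by
    rw [gam2_eq]
    refine congrArg _ ?_
    rw [Finset.sum_product]
    refine Finset.sum_congr rfl fun s _ => Finset.sum_congr rfl fun t _ => ?_
    simp only [hw]
    rw [mul_assoc]
  have hgam : gam (transpositionGraph n) f f x = (1/2) * ∑ s ∈ swapsT n, (w s)^2 := by
    rw [gam_eq]
    refine congrArg _ (Finset.sum_congr rfl fun s _ => ?_)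
    simp only [hw]; ring
  have hsplit := Finset.sum_filter_add_sum_filter_not ((swapsT n) ×ˢ (swapsT n))
    (fun q => q.1 = q.2)
    (fun q => (w (q.1*q.2) - 2*w q.1)^2 - (w q.1 - w q.2)^2)
  have hoff : ((swapsT n) ×ˢ (swapsT n)).filter (fun q => ¬ q.1 = q.2) = offP n := by
    rw [offP]
  have hdiagset : ((swapsT n) ×ˢ (swapsT n)).filter (fun q => q.1 = q.2)
      = (swapsT n).image (fun s => (s, s)) := by
    ext q
    simp only [Finset.mem_filter, Finset.mem_product, Finset.mem_image]
    constructor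
    · rintro ⟨⟨h1', _⟩, heq⟩
      exact ⟨q.1, h1', Prod.ext rfl heq⟩
    · rintro ⟨s, hs, rfl⟩
      exact ⟨⟨hs, hs⟩, rfl⟩
  have hdiag : ∑ q ∈ ((swapsT n) ×ˢ (swapsT n)).filter (fun q => q.1 = q.2),
      ((w (q.1*q.2) - 2*w q.1)^2 - (w q.1 - w q.2)^2)
      = ∑ s ∈ swapsT n, 4*(w s)^2 := by
    rw [hdiagset, Finset.sum_image (fun a _ b _ h => (Prod.ext_iff.1 h).1)]
    refine Finset.sum_congr rfl fun s hs => ?_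
    obtain ⟨a, b, hab, rfl⟩ := mem_swapsT.1 hs
    rw [Equiv.swap_mul_self]
    have hw1 : w 1 = 0 := by simp [hw]
    rw [hw1]; ring
  have hS : ∑ s ∈ swapsT n, 4*(w s)^2 = 4 * ∑ s ∈ swapsT n, (w s)^2 := by
    rw [Finset.mul_sum]
  have hoffsum : ∑ q ∈ offP n, ((w (q.1*q.2) - 2*w q.1)^2 - (w q.1 - w q.2)^2)
      = ∑ q ∈ offP n,
          ((f (x*(q.1*q.2)) - f x - 2*(f (x*q.1) - f x))^2
            - ((f (x*q.1) - f x) - (f (x*q.2) - f x))^2) :=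
    Finset.sum_congr rfl fun q _ => by simp only [hw]
  rw [h2, hgam, ← hsplit, hdiag, hoff, hoffsum] at *
  linarith

lemma part1 (n : ℕ) : RicGE (transpositionGraph n) 2 := by
  classical
  intro f x
  rw [gam2_decomp]
  have key := offP_sum_nonneg (n := n) (fun p => f (x*p) - f x)
  linarith

lemma part2 (n : ℕ) (hn : 3 ≤ n) :
    ∀ K : ℝ, RicGE (transpositionGraph n) K → K ≤ 2 := by
  classical
  intro K hK
  set f0 : Perm (Fin n) → ℝ :=
    fun σ => if σ = 1 then 0 else if σ.IsSwap then 1 else 2 with hf0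
  have hone : f0 1 = 0 := by simp [hf0]
  have hswaps : ∀ s : Perm (Fin n), s.IsSwap → f0 s = 1 := by
    intro s hs
    obtain ⟨a, b, hab, rfl⟩ := hs
    rw [hf0]
    simp only
    rw [if_neg (swap_ne_one' hab), if_pos ⟨a, b, hab, rfl⟩]
  have hprod2 : ∀ q ∈ offP n, f0 (q.1*q.2) = 2 := by
    intro q hq
    obtain ⟨hs1, hs2, hne⟩ := mem_offP.1 hq
    have hne1 : q.1 * q.2 ≠ 1 := by
      intro h
      apply hne
      have h21 : q.1 = q.2⁻¹ := eq_inv_of_mul_eq_one_left h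
      obtain ⟨a, b, hab, h2⟩ := hs2
      rw [h21, h2, Equiv.swap_inv, ← h2]
    have hnswap : ¬ (q.1 * q.2).IsSwap := by
      intro hsw
      have hsgn : Equiv.Perm.sign (q.1 * q.2) = -1 := by
        obtain ⟨a, b, hab, hh⟩ := hsw
        rw [hh]
        exact Equiv.Perm.sign_swap hab
      have hg1 : Equiv.Perm.sign q.1 = -1 := by
        obtain ⟨a, b, hab, hh⟩ := hs1
        rw [hh]; exact Equiv.Perm.sign_swap hab
      have hg2 : Equiv.Perm.sign q.2 = -1 := by
        obtain ⟨a, b, hab, hh⟩ := hs2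
        rw [hh]; exact Equiv.Perm.sign_swap hab
      rw [_root_.map_mul, hg1, hg2] at hsgn
      norm_num at hsgn
    rw [hf0]
    simp only
    rw [if_neg hne1, if_neg hnswap]
  have hzero : ∑ q ∈ offP n,
      ((f0 ((1:Perm (Fin n))*(q.1*q.2)) - f0 1 - 2*(f0 ((1:Perm (Fin n))*q.1) - f0 1))^2
        - ((f0 ((1:Perm (Fin n))*q.1) - f0 1) - (f0 ((1:Perm (Fin n))*q.2) - f0 1))^2) = 0 := by
    apply Finset.sum_eq_zero
    intro q hq
    obtain ⟨hs1, hs2, _⟩ := mem_offP.1 hq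
    rw [one_mul, one_mul, one_mul, hone, hprod2 q hq, hswaps _ hs1, hswaps _ hs2]
    ring
  have hg2 : gam2 (transpositionGraph n) f0 1 = 2 * gam (transpositionGraph n) f0 f0 1 := by
    rw [gam2_decomp, hzero]
    ring
  have hgpos : 0 < gam (transpositionGraph n) f0 f0 1 := by
    rw [gam_eq]
    have hterm : ∀ s ∈ swapsT n, (f0 1 - f0 (1*s)) * (f0 1 - f0 (1*s)) = 1 := by
      intro s hs
      rw [one_mul, hone, hswaps _ (mem_swapsT.1 hs)]
      ring
    rw [Finset.sum_congr rfl hterm, Finset.sum_const, nsmul_eq_mul, mul_one]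
    have hpos : 0 < (swapsT n).card := by
      rw [Finset.card_pos]
      refine ⟨Equiv.swap ⟨0, by omega⟩ ⟨1, by omega⟩, mem_swapsT.2 ⟨⟨0, by omega⟩, ⟨1, by omega⟩, ?_, rfl⟩⟩
      simp [Fin.ext_iff]
    have : (0:ℝ) < (swapsT n).card := by exact_mod_cast hpos
    linarith
  have := hK f0 1
  rw [hg2] at this
  nlinarith [hgpos, this]

end Aux

/-- for `n ≥ 3`, the Cayley graph of `Sₙ` with all transpositions has
`Ric = 2`. -/
theorem ric_transpositions (n : ℕ) (hn : 3 ≤ n) :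
    RicGE (transpositionGraph n) 2 ∧
      ∀ K : ℝ, RicGE (transpositionGraph n) K → K ≤ 2 := by
  exact ⟨part1 n, part2 n hn⟩
end
end

section
/- (Gradient estimate) Let G=(V,E) be a finite graph with Ric(G) ≥ K for some K ∈ ℝ, and let P_t = exp(tΔ) be the heat semigroup. Then for every f:V→ℝ and every t with 0 ≤ t ≤ 1/(2|K|) (no restriction on t if K ≥ 0), ‖f − P_t f‖₁ ≤ 2√t · ‖√(Γ(f))‖₁, where ‖g‖₁ = Σ_{v∈V} |g(v)| and √(Γ(f)) denotes the function v ↦ √(Γ(f)(v)). -/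
noncomputable section
open Matrix

open Classical in
/-- Degree of a vertex. -/
def degC {V : Type*} [Fintype V] (G : SimpleGraph V) (x : V) : ℕ :=
  (Finset.univ.filter fun y => G.Adj x y).card

open Classical in
/-- The Laplacian matrix `Δ = A - D` (negative semidefinite). -/
def lapMat {V : Type*} [Fintype V] (G : SimpleGraph V) : Matrix V V ℝ :=
  Matrix.of fun x y => (if G.Adj x y then (1:ℝ) else 0) - (if x = y then (degC G x : ℝ) else 0)

/-- The spectral gap: least nonzero eigenvalue of `-Δ`. -/
def spectralGap {V : Type*} [Fintype V] (G : SimpleGraph V) : ℝ :=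
  sInf {μ : ℝ | μ ≠ 0 ∧ ∃ f : V → ℝ, f ≠ 0 ∧ (-(lapMat G)) *ᵥ f = μ • f}

open Classical in
/-- Number of edges from `A` to its complement. -/
def boundary {V : Type*} [Fintype V] (G : SimpleGraph V) (A : Finset V) : ℕ :=
  ∑ x ∈ A, (Finset.univ.filter fun y => G.Adj x y ∧ y ∉ A).card

/-- The Cheeger (edge-isoperimetric) constant. -/
def cheeger {V : Type*} [Fintype V] (G : SimpleGraph V) : ℝ :=
  sInf {r : ℝ | ∃ A : Finset V, 0 < A.card ∧ 2 * A.card ≤ Fintype.card V ∧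
    r = (boundary G A : ℝ) / (A.card : ℝ)}

/-- The heat semigroup `P_t f = exp(tΔ) f`. -/
def heat {V : Type*} [Fintype V] [DecidableEq V] (G : SimpleGraph V) (t : ℝ) (f : V → ℝ) :
    V → ℝ :=
  (NormedSpace.exp (t • lapMat G)) *ᵥ f

namespace GE

set_option linter.unusedSectionVars false

variable {V : Type*} [Fintype V] [DecidableEq V] (G : SimpleGraph V)

open Classical in
def nb (x : V) : Finset V := Finset.univ.filter (fun y => G.Adj x y)

lemma mem_nb {x y : V} : y ∈ nb G x ↔ G.Adj x y := by
  classical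
  simp [nb]

lemma finsum_adj (x : V) (F : V → ℝ) :
    ∑ᶠ y ∈ {y | G.Adj x y}, F y = ∑ y ∈ nb G x, F y := by
  rw [← finsum_mem_coe_finset]
  congr 1
  ext y
  simp [mem_nb]

lemma lap_eq (f : V → ℝ) (x : V) : lap G f x = ∑ y ∈ nb G x, (f y - f x) := by
  rw [lap, finsum_adj]

lemma gam_eq (f g : V → ℝ) (x : V) :
    gam G f g x = (1/2) * ∑ y ∈ nb G x, (f x - f y) * (g x - g y) := by
  rw [gam, finsum_adj]

lemma gam_nonneg (f : V → ℝ) (x : V) : 0 ≤ gam G f f x := by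
  rw [gam_eq]
  have : ∀ y ∈ nb G x, 0 ≤ (f x - f y) * (f x - f y) := fun y _ => mul_self_nonneg _
  have h := Finset.sum_nonneg this
  linarith

lemma gam_comm (f g : V → ℝ) (x : V) : gam G f g x = gam G g f x := by
  rw [gam_eq, gam_eq]
  congr 1
  exact Finset.sum_congr rfl fun y _ => by ring

lemma two_gam (f g : V → ℝ) (x : V) :
    2 * gam G f g x = ∑ y ∈ nb G x, (f x - f y) * (g x - g y) := by
  rw [gam_eq]; ring

/-- Cauchy–Schwarz for the carré du champ. -/
lemma gam_CS (f g : V → ℝ) (x : V) :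
    gam G f g x ≤ Real.sqrt (gam G f f x) * Real.sqrt (gam G g g x) := by
  rw [gam_eq, gam_eq, gam_eq]
  have ef : ∑ y ∈ nb G x, (f x - f y) * (f x - f y) = ∑ y ∈ nb G x, (f x - f y)^2 :=
    Finset.sum_congr rfl fun y _ => by ring
  have eg : ∑ y ∈ nb G x, (g x - g y) * (g x - g y) = ∑ y ∈ nb G x, (g x - g y)^2 :=
    Finset.sum_congr rfl fun y _ => by ring
  rw [ef, eg, Real.sqrt_mul (by norm_num : (0:ℝ) ≤ 1/2),
    Real.sqrt_mul (by norm_num : (0:ℝ) ≤ 1/2)]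
  have h := Real.sum_mul_le_sqrt_mul_sqrt (nb G x) (fun y => f x - f y) (fun y => g x - g y)
  have hh : Real.sqrt (1/2) * Real.sqrt (1/2) = 1/2 := Real.mul_self_sqrt (by norm_num)
  rw [mul_mul_mul_comm, hh]
  have := mul_le_mul_of_nonneg_left h (by norm_num : (0:ℝ) ≤ 1/2)
  linarith

/-- integration by parts: `∑ Δf · g = -∑ Γ(f,g)`. -/
lemma sum_lap_mul (f g : V → ℝ) :
    ∑ x, lap G f x * g x = -∑ x, gam G f g x := by
  classical
  have hl : ∀ x, lap G f x * g x = ∑ y, (if G.Adj x y then (f y - f x) * g x else 0) := by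
    intro x
    rw [lap_eq, Finset.sum_mul, nb, Finset.sum_filter]
  have hg : ∀ x, gam G f g x
      = ∑ y, (if G.Adj x y then (1/2) * ((f x - f y) * (g x - g y)) else 0) := by
    intro x
    rw [gam_eq, Finset.mul_sum, nb, Finset.sum_filter]
  have key : ∀ F : V → V → ℝ, ∑ x, ∑ y, (if G.Adj x y then F x y else 0)
      = ∑ x, ∑ y, (if G.Adj x y then F y x else 0) := by
    intro F
    rw [Finset.sum_comm]
    refine Finset.sum_congr rfl fun x _ => Finset.sum_congr rfl fun y _ => ?_
    by_cases h : G.Adj x y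
    · simp [h, h.symm]
    · rw [if_neg h, if_neg (fun h' : G.Adj y x => h h'.symm)]
  have main : (∑ x, (lap G f x * g x + gam G f g x))
      + (∑ x, (lap G f x * g x + gam G f g x)) = 0 := by
    have e1 : ∑ x, (lap G f x * g x + gam G f g x)
        = ∑ x, ∑ y, (if G.Adj x y then
            ((f y - f x) * g x + (1/2) * ((f x - f y) * (g x - g y))) else 0) := by
      refine Finset.sum_congr rfl fun x _ => ?_
      rw [hl, hg, ← Finset.sum_add_distrib]
      exact Finset.sum_congr rfl fun y _ => by by_cases h : G.Adj x y <;> simp [h]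
    rw [e1]
    nth_rewrite 2 [key _]
    rw [← Finset.sum_add_distrib]
    refine Finset.sum_eq_zero fun x _ => ?_
    rw [← Finset.sum_add_distrib]
    refine Finset.sum_eq_zero fun y _ => ?_
    by_cases h : G.Adj x y
    · simp only [if_pos h]; ring
    · simp [h]
  have h0 : ∑ x, (lap G f x * g x + gam G f g x) = 0 := by linarith
  rw [Finset.sum_add_distrib] at h0
  linarith

/-- `Δ(w²) - 2wΔw = 2Γ(w)` pointwise. -/
lemma lap_sq (w : V → ℝ) (x : V) :
    lap G (fun v => w v * w v) x - 2 * w x * lap G w x = 2 * gam G w w x := by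
  rw [lap_eq, lap_eq, two_gam, Finset.mul_sum, ← Finset.sum_sub_distrib]
  exact Finset.sum_congr rfl fun y _ => by ring


set_option linter.unusedSectionVars false
section MatrixFacts

attribute [local instance] Matrix.linftyOpSemiNormedRing Matrix.linftyOpNormedRing
  Matrix.linftyOpNormedAlgebra

variable {V : Type*} [Fintype V] [DecidableEq V] (G : SimpleGraph V)

/-- The heat kernel matrix. -/
def EM (u : ℝ) : Matrix V V ℝ := NormedSpace.exp (u • lapMat G)

lemma heat_eq (u : ℝ) (w : V → ℝ) (x : V) : heat G u w x = ∑ y, EM G u x y * w y := by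
  simp [heat, EM, Matrix.mulVec, dotProduct]

lemma lapMat_isSymm : (lapMat G).IsSymm := by
  ext x y
  simp only [Matrix.transpose_apply, lapMat, Matrix.of_apply]
  by_cases h : x = y
  · subst h; rfl
  · rw [if_neg h, if_neg (Ne.symm h)]
    by_cases ha : G.Adj x y
    · rw [if_pos ha, if_pos ha.symm]
    · rw [if_neg ha, if_neg (fun h' => ha h'.symm)]

lemma EM_symm (u : ℝ) (x y : V) : EM G u x y = EM G u y x := by
  have h : ((u • lapMat G : Matrix V V ℝ)).IsSymm := by
    rw [Matrix.IsSymm, Matrix.transpose_smul, (lapMat_isSymm G).eq]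
  have h2 := (Matrix.IsSymm.exp h).eq
  rw [EM]
  conv_rhs => rw [← h2]
  simp [Matrix.transpose_apply]

lemma EM_zero : EM G 0 = 1 := by
  rw [EM, zero_smul, NormedSpace.exp_zero]

lemma commute_EM (u : ℝ) : lapMat G * EM G u = EM G u * lapMat G :=
  (((Commute.refl (lapMat G)).smul_right u).exp_right)

private def entryLM (x y : V) : Matrix V V ℝ →ₗ[ℝ] ℝ where
  toFun M := M x y
  map_add' _ _ := rfl
  map_smul' _ _ := rfl

private def mvLM (w : V → ℝ) (x : V) : Matrix V V ℝ →ₗ[ℝ] ℝ where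
  toFun M := (M *ᵥ w) x
  map_add' A B := by simp [Matrix.add_mulVec]
  map_smul' c A := by simp [Matrix.smul_mulVec]

lemma exp_entry_eq_tsum (X : Matrix V V ℝ) (x y : V) :
    (NormedSpace.exp X) x y = ∑' n : ℕ, ((n.factorial : ℝ)⁻¹ * (X ^ n) x y) := by
  have hs := NormedSpace.expSeries_summable' (𝕂 := ℝ) X
  have := ((entryLM x y).toContinuousLinearMap).map_tsum hs
  rw [NormedSpace.exp_eq_tsum ℝ]
  exact this

lemma pow_entry_nonneg {X : Matrix V V ℝ} (hX : ∀ x y, 0 ≤ X x y) :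
    ∀ (n : ℕ) (x y : V), 0 ≤ (X ^ n) x y := by
  intro n
  induction n with
  | zero => intro x y; by_cases h : x = y <;> simp [Matrix.one_apply, h]
  | succ m ih =>
    intro x y
    rw [pow_succ, Matrix.mul_apply]
    exact Finset.sum_nonneg fun z _ => mul_nonneg (ih x z) (hX z y)

lemma exp_entry_nonneg {X : Matrix V V ℝ} (hX : ∀ x y, 0 ≤ X x y) (x y : V) :
    0 ≤ (NormedSpace.exp X) x y := by
  rw [exp_entry_eq_tsum]
  exact tsum_nonneg fun n => mul_nonneg (by positivity) (pow_entry_nonneg hX n x y)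

lemma scalar_exp (r : ℝ) :
    NormedSpace.exp (r • (1 : Matrix V V ℝ)) = Real.exp r • (1 : Matrix V V ℝ) := by
  rw [← Algebra.algebraMap_eq_smul_one, Real.exp_eq_exp_ℝ, ← Algebra.algebraMap_eq_smul_one]
  exact (NormedSpace.algebraMap_exp_comm (𝔸 := Matrix V V ℝ) r).symm

lemma degC_le (x : V) : (degC G x : ℝ) ≤ (Fintype.card V : ℝ) := by
  have : degC G x ≤ Fintype.card V := by
    classical
    exact (Finset.card_filter_le _ _).trans (by simp)
  exact_mod_cast this

lemma EM_nonneg {u : ℝ} (hu : 0 ≤ u) (x y : V) : 0 ≤ EM G u x y := by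
  classical
  set c : ℝ := (Fintype.card V : ℝ) with hc
  set X : Matrix V V ℝ := u • lapMat G + (u * c) • (1 : Matrix V V ℝ) with hXdef
  have hX : ∀ x y, 0 ≤ X x y := by
    intro a b
    simp only [hXdef, Matrix.add_apply, Matrix.smul_apply, lapMat, Matrix.of_apply,
      Matrix.one_apply, smul_eq_mul]
    by_cases h : a = b
    · subst h
      rw [if_pos rfl, if_pos rfl, if_neg (G.irrefl)]
      have := degC_le G a
      nlinarith
    · rw [if_neg h, if_neg h]
      by_cases ha : G.Adj a b <;> simp [ha] <;> nlinarith [hu]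
  have hsplit : u • lapMat G = X + (-(u * c)) • (1 : Matrix V V ℝ) := by
    rw [hXdef]
    rw [add_assoc, ← add_smul]
    simp
  have hcomm : Commute X ((-(u * c)) • (1 : Matrix V V ℝ)) :=
    (Commute.one_right X).smul_right _
  rw [EM, hsplit, Matrix.exp_add_of_commute _ _ hcomm, scalar_exp, Matrix.mul_apply]
  have : ∀ z, 0 ≤ (NormedSpace.exp X) x z * (Real.exp (-(u * c)) • (1 : Matrix V V ℝ)) z y := by
    intro z
    refine mul_nonneg (exp_entry_nonneg hX x z) ?_
    simp only [Matrix.smul_apply, Matrix.one_apply, smul_eq_mul]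
    by_cases h : z = y <;> simp [h, Real.exp_nonneg]
  exact Finset.sum_nonneg fun z _ => this z

lemma lapMat_mulVec_one : lapMat G *ᵥ (fun _ => (1:ℝ)) = 0 := by
  classical
  funext x
  simp only [Matrix.mulVec, dotProduct, lapMat, Matrix.of_apply, mul_one, Pi.zero_apply]
  rw [Finset.sum_sub_distrib]
  simp [Finset.sum_ite_eq, degC, Finset.sum_boole]
  refine sub_eq_zero.mpr ?_
  rw [Finset.sum_eq_single x]
  · simp
  · intro b _ hb; simp [Ne.symm hb]
  · simp

lemma EM_rowsum (u : ℝ) (x : V) : ∑ y, EM G u x y = 1 := by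
  have h1 : ∑ y, EM G u x y = (EM G u *ᵥ (fun _ => (1:ℝ))) x := by
    simp [Matrix.mulVec, dotProduct]
  rw [h1, EM]
  have hs := NormedSpace.expSeries_summable' (𝕂 := ℝ) (u • lapMat G)
  have hmap := ((mvLM (fun _ => (1:ℝ)) x).toContinuousLinearMap).map_tsum hs
  rw [NormedSpace.exp_eq_tsum ℝ]
  have h2 : ∀ n : ℕ, n ≠ 0 →
      (mvLM (V := V) (fun _ => (1:ℝ)) x) ((n.factorial : ℝ)⁻¹ • (u • lapMat G) ^ n) = 0 := by
    intro n hn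
    obtain ⟨m, rfl⟩ := Nat.exists_eq_succ_of_ne_zero hn
    have : ((u • lapMat G) ^ (m + 1)) *ᵥ (fun _ => (1:ℝ)) = 0 := by
      rw [pow_succ, ← Matrix.mulVec_mulVec]
      rw [Matrix.smul_mulVec, lapMat_mulVec_one]
      simp
    simp only [mvLM, LinearMap.coe_mk, AddHom.coe_mk, Matrix.smul_mulVec, this]
    simp
  calc (mvLM (fun _ => (1:ℝ)) x) (∑' n : ℕ, (n.factorial : ℝ)⁻¹ • (u • lapMat G) ^ n)
      = ∑' n : ℕ, (mvLM (V := V) (fun _ => (1:ℝ)) x) ((n.factorial : ℝ)⁻¹ • (u • lapMat G) ^ n) := by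
        simpa using hmap
    _ = 1 := by
        rw [tsum_eq_single 0 h2]
        simp [mvLM, Matrix.one_mulVec]

lemma hasDerivAt_EM_entry (x y : V) (u₀ : ℝ) :
    HasDerivAt (fun u => EM G u x y) ((lapMat G * EM G u₀) x y) u₀ := by
  have h := hasDerivAt_exp_smul_const' (𝕂 := ℝ) (lapMat G) u₀
  have h2 := ((entryLM (V := V) x y).toContinuousLinearMap).hasFDerivAt.comp_hasDerivAt u₀ h
  exact h2

lemma continuous_EM_entry (x y : V) : Continuous fun u : ℝ => EM G u x y := by
  have : Differentiable ℝ fun u : ℝ => EM G u x y :=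
    fun u => (hasDerivAt_EM_entry G x y u).differentiableAt
  exact this.continuous

end MatrixFacts

section HeatFacts

variable {V : Type*} [Fintype V] [DecidableEq V] (G : SimpleGraph V)

lemma lap_mulVec (w : V → ℝ) (x : V) : (lapMat G *ᵥ w) x = lap G w x := by
  classical
  rw [lap_eq, Finset.sum_sub_distrib, Finset.sum_const]
  simp only [Matrix.mulVec, dotProduct, lapMat, Matrix.of_apply, sub_mul, ite_mul, one_mul,
    zero_mul, Finset.sum_sub_distrib]
  congr 1
  · rw [nb, Finset.sum_filter]
  · rw [Finset.sum_ite_eq]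
    simp only [Finset.mem_univ, if_pos, nsmul_eq_mul]
    have : (nb G x).card = degC G x := by rw [nb, degC]
    rw [this]

lemma heat_EM (u : ℝ) (w : V → ℝ) : heat G u w = EM G u *ᵥ w := rfl

lemma heat_zero (w : V → ℝ) : heat G 0 w = w := by
  funext v
  rw [heat_eq, EM_zero]
  simp [Matrix.one_apply]

lemma hasDerivAt_heat (w : V → ℝ) (x : V) (u₀ : ℝ) :
    HasDerivAt (fun u => heat G u w x) (lap G (heat G u₀ w) x) u₀ := by
  have h : ∀ y ∈ Finset.univ, HasDerivAt (fun u => EM G u x y * w y)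
      ((lapMat G * EM G u₀) x y * w y) u₀ :=
    fun y _ => (hasDerivAt_EM_entry G x y u₀).mul_const _
  have hs := HasDerivAt.fun_sum h
  have e1 : (fun u => heat G u w x) = fun u => ∑ y, EM G u x y * w y :=
    funext fun u => heat_eq G u w x
  have e2 : ∑ y, (lapMat G * EM G u₀) x y * w y = lap G (heat G u₀ w) x := by
    have h1 : ∑ y, (lapMat G * EM G u₀) x y * w y = ((lapMat G * EM G u₀) *ᵥ w) x := by
      simp [Matrix.mulVec, dotProduct]
    rw [h1, ← Matrix.mulVec_mulVec, ← heat_EM, lap_mulVec]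
  rw [e1, ← e2]
  exact hs

lemma continuous_heat (w : V → ℝ) (x : V) : Continuous fun u : ℝ => heat G u w x := by
  have : Differentiable ℝ fun u : ℝ => heat G u w x :=
    fun u => (hasDerivAt_heat G w x u).differentiableAt
  exact this.continuous

lemma heat_lap_comm (u : ℝ) (w : V → ℝ) (x : V) :
    lap G (heat G u w) x = heat G u (lap G w) x := by
  have h2 : (lapMat G *ᵥ w) = lap G w := funext (lap_mulVec G w)
  have h1 : lap G (heat G u w) x = (lapMat G *ᵥ (EM G u *ᵥ w)) x := by
    rw [← heat_EM, lap_mulVec]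
  rw [Matrix.mulVec_mulVec, commute_EM, ← Matrix.mulVec_mulVec, h2, ← heat_EM] at h1
  exact h1

lemma heat_symm_sum (u : ℝ) (w g : V → ℝ) :
    ∑ x, heat G u w x * g x = ∑ x, w x * heat G u g x := by
  calc ∑ x, heat G u w x * g x = ∑ x, ∑ y, EM G u x y * w y * g x := by
        refine Finset.sum_congr rfl fun x _ => ?_
        rw [heat_eq, Finset.sum_mul]
    _ = ∑ y, ∑ x, EM G u x y * w y * g x := Finset.sum_comm
    _ = ∑ y, w y * heat G u g y := by
        refine Finset.sum_congr rfl fun y _ => ?_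
        rw [heat_eq, Finset.mul_sum]
        refine Finset.sum_congr rfl fun x _ => ?_
        rw [EM_symm]
        ring

lemma heat_one (u : ℝ) (x : V) : heat G u (fun _ => (1:ℝ)) x = 1 := by
  rw [heat_eq]
  simp [EM_rowsum]

lemma heat_mono {u : ℝ} (hu : 0 ≤ u) {w₁ w₂ : V → ℝ} (h : ∀ y, w₁ y ≤ w₂ y) (x : V) :
    heat G u w₁ x ≤ heat G u w₂ x := by
  rw [heat_eq, heat_eq]
  exact Finset.sum_le_sum fun y _ =>
    mul_le_mul_of_nonneg_left (h y) (EM_nonneg G hu x y)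

lemma heat_smul (c u : ℝ) (w : V → ℝ) (x : V) :
    heat G u (fun y => c * w y) x = c * heat G u w x := by
  rw [heat_eq, heat_eq, Finset.mul_sum]
  exact Finset.sum_congr rfl fun y _ => by ring

end HeatFacts

section MoreHeat

variable {V : Type*} [Fintype V] [DecidableEq V] (G : SimpleGraph V)

lemma heat_add (u : ℝ) (w₁ w₂ : V → ℝ) (x : V) :
    heat G u (fun y => w₁ y + w₂ y) x = heat G u w₁ x + heat G u w₂ x := by
  rw [heat_eq, heat_eq, heat_eq, ← Finset.sum_add_distrib]
  exact Finset.sum_congr rfl fun y _ => by ring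

lemma gam_neg (f w : V → ℝ) (y : V) :
    gam G f (fun v => -(w v)) y = - gam G f w y := by
  rw [gam_eq, gam_eq]
  have e : ∑ z ∈ nb G y, (f y - f z) * (-w y - -w z)
      = ∑ z ∈ nb G y, -((f y - f z) * (w y - w z)) :=
    Finset.sum_congr rfl fun z _ => by ring
  rw [e, Finset.sum_neg_distrib]
  ring

lemma hasDerivAt_gam_self {a : ℝ → V → ℝ} {a' : V → ℝ} {u₀ : ℝ}
    (ha : ∀ v, HasDerivAt (fun u => a u v) (a' v) u₀) (y : V) :
    HasDerivAt (fun u => gam G (a u) (a u) y) (2 * gam G (a u₀) a' y) u₀ := by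
  have h : ∀ z ∈ nb G y, HasDerivAt (fun u => (a u y - a u z) * (a u y - a u z))
      ((a' y - a' z) * (a u₀ y - a u₀ z) + (a u₀ y - a u₀ z) * (a' y - a' z)) u₀ :=
    fun z _ => ((ha y).sub (ha z)).mul ((ha y).sub (ha z))
  have hs2 := (HasDerivAt.fun_sum h).const_mul (1/2 : ℝ)
  have e1 : (fun u => (1/2 : ℝ) * ∑ z ∈ nb G y, (a u y - a u z) * (a u y - a u z))
      = fun u => gam G (a u) (a u) y := funext fun u => (gam_eq G _ _ y).symm
  rw [e1] at hs2
  refine hs2.congr_deriv (Eq.symm ?_)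
  rw [two_gam, Finset.mul_sum]
  exact Finset.sum_congr rfl fun z _ => by ring

end MoreHeat


section KeyBound

variable {V : Type*} [Fintype V] [DecidableEq V] (G : SimpleGraph V)

lemma key_bound (K : ℝ) (hric : RicGE G K) (g : V → ℝ) (hg : ∀ v, |g v| ≤ 1)
    {s : ℝ} (hs : 0 < s) (hKs : -(1/2 : ℝ) ≤ K * s) (x : V) :
    gam G (heat G s g) (heat G s g) x ≤ 1 / s := by
  classical
  set h : ℝ → V → ℝ := fun u => heat G (s - u) g with hh
  have hder_h : ∀ (u₀ : ℝ) (v : V),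
      HasDerivAt (fun u => h u v) (-(lap G (h u₀) v)) u₀ := by
    intro u₀ v
    have h1 := hasDerivAt_heat G g v (s - u₀)
    have h2 : HasDerivAt (fun u : ℝ => s - u) (-1) u₀ := by
      simpa using (hasDerivAt_id u₀).const_sub s
    have h3 := h1.comp u₀ h2
    simpa [hh, Function.comp_def] using h3
  set F : ℝ → ℝ := fun u => heat G u (fun y => gam G (h u) (h u) y) x with hF
  -- derivative of the inner gamma
  have hder_gam : ∀ (u₀ : ℝ) (y : V), HasDerivAt (fun u => gam G (h u) (h u) y)
      (-2 * gam G (h u₀) (lap G (h u₀)) y) u₀ := by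
    intro u₀ y
    have hd := hasDerivAt_gam_self G (a := h) (a' := fun v => -(lap G (h u₀) v))
      (fun v => hder_h u₀ v) y
    convert hd using 1
    rw [gam_neg]
    ring
  -- derivative of F
  have hder_F : ∀ u₀ : ℝ, HasDerivAt F (heat G u₀ (fun y => 2 * gam2 G (h u₀) y) x) u₀ := by
    intro u₀
    have hterm : ∀ y ∈ Finset.univ, HasDerivAt
        (fun u => EM G u x y * gam G (h u) (h u) y)
        ((lapMat G * EM G u₀) x y * gam G (h u₀) (h u₀) y
          + EM G u₀ x y * (-2 * gam G (h u₀) (lap G (h u₀)) y)) u₀ :=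
      fun y _ => (hasDerivAt_EM_entry G x y u₀).mul (hder_gam u₀ y)
    have hsum := HasDerivAt.fun_sum hterm
    have e1 : F = fun u => ∑ y, EM G u x y * gam G (h u) (h u) y :=
      funext fun u => heat_eq G u _ x
    rw [e1]
    refine hsum.congr_deriv (Eq.symm ?_)
    rw [Finset.sum_add_distrib]
    have eA : ∑ y, (lapMat G * EM G u₀) x y * gam G (h u₀) (h u₀) y
        = heat G u₀ (lap G (fun y => gam G (h u₀) (h u₀) y)) x := by
      have h1 : ∑ y, (lapMat G * EM G u₀) x y * gam G (h u₀) (h u₀) y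
          = ((lapMat G * EM G u₀) *ᵥ (fun y => gam G (h u₀) (h u₀) y)) x := by
        simp [Matrix.mulVec, dotProduct]
      rw [h1, ← Matrix.mulVec_mulVec, ← heat_EM, lap_mulVec, heat_lap_comm]
    have eB : ∑ y, EM G u₀ x y * (-2 * gam G (h u₀) (lap G (h u₀)) y)
        = heat G u₀ (fun y => -2 * gam G (h u₀) (lap G (h u₀)) y) x :=
      (heat_eq G u₀ _ x).symm
    rw [eA, eB, ← heat_add]
    congr 1
    funext y
    rw [gam2]

    ring
  have hF_cont : Continuous F := Differentiable.continuous (fun u => (hder_F u).differentiableAt)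
  have hDge : ∀ u₀, 0 ≤ u₀ → 2 * K * F u₀ ≤ heat G u₀ (fun y => 2 * gam2 G (h u₀) y) x := by
    intro u₀ hu₀
    have hmono := heat_mono G hu₀ (w₁ := fun y => 2 * K * gam G (h u₀) (h u₀) y)
        (w₂ := fun y => 2 * gam2 G (h u₀) y)
        (fun y => show 2 * K * gam G (h u₀) (h u₀) y ≤ 2 * gam2 G (h u₀) y by
          linarith [hric (h u₀) y]) x
    calc 2 * K * F u₀ = heat G u₀ (fun y => 2 * K * gam G (h u₀) (h u₀) y) x :=
          (heat_smul G (2*K) u₀ _ x).symm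
      _ ≤ heat G u₀ (fun y => 2 * gam2 G (h u₀) y) x := hmono
  set Φ : ℝ → ℝ := fun u => Real.exp (-(2*K)*u) * F u with hΦdef
  have hder_Φ : ∀ u₀, HasDerivAt Φ (Real.exp (-(2*K)*u₀) *
      ((heat G u₀ (fun y => 2 * gam2 G (h u₀) y) x) - 2*K*F u₀)) u₀ := by
    intro u₀
    have he : HasDerivAt (fun u : ℝ => Real.exp (-(2*K)*u))
        (Real.exp (-(2*K)*u₀) * (-(2*K))) u₀ := by
      have hl : HasDerivAt (fun u : ℝ => -(2*K)*u) (-(2*K)) u₀ := by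
        simpa using (hasDerivAt_id u₀).const_mul (-(2*K))
      exact hl.exp
    have hmul := he.mul (hder_F u₀)
    refine hmul.congr_deriv (Eq.symm ?_)
    ring
  have hΦcont : Continuous Φ := by
    apply Continuous.mul
    · exact Real.continuous_exp.comp (continuous_const.mul continuous_id)
    · exact hF_cont
  have hmonoΦ : MonotoneOn Φ (Set.Icc 0 s) := by
    apply monotoneOn_of_deriv_nonneg (convex_Icc 0 s) hΦcont.continuousOn
    · intro u hu
      exact ((hder_Φ u).differentiableAt).differentiableWithinAt
    · intro u hu
      rw [interior_Icc] at hu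
      rw [(hder_Φ u).deriv]
      have := hDge u hu.1.le
      have hexp := (Real.exp_pos (-(2*K)*u)).le
      nlinarith
  have hF0 : F 0 = gam G (heat G s g) (heat G s g) x := by
    have e0 : h 0 = heat G s g := by rw [hh]; simp
    calc F 0 = heat G 0 (fun y => gam G (h 0) (h 0) y) x := rfl
      _ = gam G (h 0) (h 0) x := congrFun (heat_zero G _) x
      _ = gam G (heat G s g) (heat G s g) x := by rw [e0]
  have hFlower : ∀ u ∈ Set.Icc (0:ℝ) s, Real.exp (2*K*u) * F 0 ≤ F u := by
    intro u hu
    have h1 := hmonoΦ (Set.left_mem_Icc.mpr hs.le) hu hu.1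
    have h2 : Φ 0 = F 0 := by simp [hΦdef]
    rw [h2] at h1
    have h3 := mul_le_mul_of_nonneg_left h1 (Real.exp_pos (2*K*u)).le
    calc Real.exp (2*K*u) * F 0 ≤ Real.exp (2*K*u) * (Real.exp (-(2*K)*u) * F u) := h3
      _ = F u := by
          rw [← mul_assoc, ← Real.exp_add, show 2*K*u + -(2*K)*u = 0 by ring,
            Real.exp_zero, one_mul]
  set ψ : ℝ → ℝ := fun u => heat G u (fun y => h u y * h u y) x with hψdef
  have hder_ψ : ∀ u₀, HasDerivAt ψ (2 * F u₀) u₀ := by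
    intro u₀
    have hterm : ∀ y ∈ Finset.univ, HasDerivAt (fun u => EM G u x y * (h u y * h u y))
        ((lapMat G * EM G u₀) x y * (h u₀ y * h u₀ y)
          + EM G u₀ x y * (-(lap G (h u₀) y) * h u₀ y + h u₀ y * -(lap G (h u₀) y))) u₀ :=
      fun y _ => (hasDerivAt_EM_entry G x y u₀).mul ((hder_h u₀ y).mul (hder_h u₀ y))
    have hsum := HasDerivAt.fun_sum hterm
    have e1 : ψ = fun u => ∑ y, EM G u x y * (h u y * h u y) :=
      funext fun u => heat_eq G u _ x
    rw [e1]
    refine hsum.congr_deriv (Eq.symm ?_)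
    rw [Finset.sum_add_distrib]
    have eA : ∑ y, (lapMat G * EM G u₀) x y * (h u₀ y * h u₀ y)
        = heat G u₀ (lap G (fun v => h u₀ v * h u₀ v)) x := by
      have h1 : ∑ y, (lapMat G * EM G u₀) x y * (h u₀ y * h u₀ y)
          = ((lapMat G * EM G u₀) *ᵥ (fun v => h u₀ v * h u₀ v)) x := by
        simp [Matrix.mulVec, dotProduct]
      rw [h1, ← Matrix.mulVec_mulVec, ← heat_EM, lap_mulVec, heat_lap_comm]
    have eB : ∑ y, EM G u₀ x y * (-(lap G (h u₀) y) * h u₀ y + h u₀ y * -(lap G (h u₀) y))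
        = heat G u₀ (fun y => (-(lap G (h u₀) y) * h u₀ y + h u₀ y * -(lap G (h u₀) y))) x :=
      (heat_eq G u₀ _ x).symm
    rw [eA, eB, ← heat_add]
    have e2 : 2 * F u₀ = heat G u₀ (fun y => 2 * gam G (h u₀) (h u₀) y) x :=
      (heat_smul G 2 u₀ _ x).symm
    rw [e2]
    congr 1
    funext y
    have hls := lap_sq G (h u₀) y
    linarith
  have hψF_cont : Continuous fun u => 2 * F u := continuous_const.mul hF_cont
  have hFTC : ∫ u in (0:ℝ)..s, 2 * F u = ψ s - ψ 0 :=
    intervalIntegral.integral_eq_sub_of_hasDerivAt (fun u _ => hder_ψ u)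
      (hψF_cont.intervalIntegrable 0 s)
  have hcont_exp : Continuous fun u : ℝ => 2 * Real.exp (2*K*u) * F 0 := by fun_prop
  have hcont_lin : Continuous fun u : ℝ => 2 * (1 + 2*K*u) * F 0 := by fun_prop
  have hcomp : ∫ u in (0:ℝ)..s, 2 * Real.exp (2*K*u) * F 0 ≤ ∫ u in (0:ℝ)..s, 2 * F u := by
    apply intervalIntegral.integral_mono_on hs.le (hcont_exp.intervalIntegrable 0 s)
      (hψF_cont.intervalIntegrable 0 s)
    intro u hu
    have := hFlower u hu
    linarith
  have hF0nonneg : 0 ≤ F 0 := by rw [hF0]; exact gam_nonneg G _ x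
  have hlin : ∫ u in (0:ℝ)..s, 2 * (1 + 2*K*u) * F 0
      ≤ ∫ u in (0:ℝ)..s, 2 * Real.exp (2*K*u) * F 0 := by
    apply intervalIntegral.integral_mono_on hs.le (hcont_lin.intervalIntegrable 0 s)
      (hcont_exp.intervalIntegrable 0 s)
    intro u hu
    have hle := Real.add_one_le_exp (2*K*u)
    nlinarith
  have hval : ∫ u in (0:ℝ)..s, 2 * (1 + 2*K*u) * F 0 = (2*s + 2*K*s^2) * F 0 := by
    rw [intervalIntegral.integral_mul_const]
    have hanti : ∀ u ∈ Set.uIcc (0:ℝ) s, HasDerivAt (fun v => 2*v + 2*K*v^2)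
        (2 * (1 + 2*K*u)) u := by
      intro u _
      have h1 : HasDerivAt (fun v : ℝ => 2*v) 2 u := by
        simpa using (hasDerivAt_id u).const_mul (2:ℝ)
      have h2 : HasDerivAt (fun v : ℝ => 2*K*v^2) (2*K*(2*u)) u := by
        simpa using (hasDerivAt_pow 2 u).const_mul (2*K)
      have h3 := h1.add h2
      have e : 2*(1+2*K*u) = 2 + 2*K*(2*u) := by ring
      rw [e]
      exact h3
    rw [intervalIntegral.integral_eq_sub_of_hasDerivAt hanti
      (Continuous.intervalIntegrable (by fun_prop) 0 s)]
    ring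
  have hψs : ψ s ≤ 1 := by
    have hg2 : ∀ y, h s y * h s y ≤ 1 := by
      intro y
      have e0 : h s y = g y := by
        rw [hh]
        simp only [sub_self]
        exact congrFun (heat_zero G g) y
      rw [e0]
      have := abs_le.mp (hg y)
      nlinarith
    calc ψ s = heat G s (fun y => h s y * h s y) x := rfl
      _ ≤ heat G s (fun _ => 1) x := heat_mono G hs.le hg2 x
      _ = 1 := heat_one G s x
  have hψ0 : 0 ≤ ψ 0 := by
    have e0 : ψ 0 = h 0 x * h 0 x := congrFun (heat_zero G _) x
    rw [e0]
    exact mul_self_nonneg _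
  have hmain : (2*s + 2*K*s^2) * F 0 ≤ 1 := by linarith
  have hcoef : s ≤ 2*s + 2*K*s^2 := by nlinarith
  have hfin : s * F 0 ≤ 1 :=
    le_trans (mul_le_mul_of_nonneg_right hcoef hF0nonneg) hmain
  rw [hF0] at hfin
  rw [le_div_iff₀ hs]
  linarith

end KeyBound

end GE

open GE in
/-- gradient estimate: if `Ric(G) ≥ K` then for `0 ≤ t` (with
`t ≤ 1/(2|K|)` when `K < 0`), `‖f - P_t f‖₁ ≤ 2 √t ‖√(Γ(f))‖₁`. -/
theorem gradient_estimate {V : Type*} [Fintype V] [DecidableEq V] (G : SimpleGraph V)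
    (K : ℝ) (hric : RicGE G K) (f : V → ℝ) (t : ℝ) (ht0 : 0 ≤ t)
    (ht1 : K < 0 → t ≤ 1 / (2 * |K|)) :
    ∑ v, |f v - heat G t f v| ≤ 2 * Real.sqrt t * ∑ v, Real.sqrt (gam G f f v) := by
  classical
  rcases eq_or_lt_of_le ht0 with h0 | htpos
  · have : heat G t f = f := by rw [← h0, heat_zero]
    rw [this]
    simp only [sub_self, abs_zero, Finset.sum_const, smul_zero]
    have : 0 ≤ 2 * Real.sqrt t * ∑ v, Real.sqrt (gam G f f v) := by
      apply mul_nonneg (by positivity)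
      exact Finset.sum_nonneg fun v _ => Real.sqrt_nonneg _
    linarith
  -- main case 0 < t
  set g : V → ℝ := fun v => if 0 ≤ f v - heat G t f v then 1 else -1 with hgdef
  have hg1 : ∀ v, |g v| ≤ 1 := by
    intro v
    rw [hgdef]
    by_cases hv : 0 ≤ f v - heat G t f v <;> simp [hv]
  have habs : ∀ v, |f v - heat G t f v| = (f v - heat G t f v) * g v := by
    intro v
    rw [hgdef]
    beta_reduce
    by_cases hv : 0 ≤ f v - heat G t f v
    · rw [if_pos hv, mul_one, abs_of_nonneg hv]
    · rw [if_neg hv, abs_of_neg (lt_of_not_ge hv)]; ring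
  have hcont_lap : ∀ v, Continuous fun s : ℝ => lap G (heat G s f) v := by
    intro v
    have e : (fun s : ℝ => lap G (heat G s f) v)
        = fun s => ∑ y ∈ nb G v, (heat G s f y - heat G s f v) :=
      funext fun s => lap_eq G (heat G s f) v
    rw [e]
    exact continuous_finset_sum _ fun y _ => (continuous_heat G f y).sub (continuous_heat G f v)
  have hFTCv : ∀ v, (f v - heat G t f v) * g v
      = ∫ s in (0:ℝ)..t, (-(lap G (heat G s f) v)) * g v := by
    intro v
    have h1 : ∫ s in (0:ℝ)..t, lap G (heat G s f) v = heat G t f v - heat G 0 f v :=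
      intervalIntegral.integral_eq_sub_of_hasDerivAt
        (fun s _ => hasDerivAt_heat G f v s)
        ((hcont_lap v).intervalIntegrable 0 t)
    have h2 : ∫ s in (0:ℝ)..t, (-(lap G (heat G s f) v)) * g v
        = (∫ s in (0:ℝ)..t, -(lap G (heat G s f) v)) * g v :=
      intervalIntegral.integral_mul_const _ _
    rw [h2, intervalIntegral.integral_neg, h1, congrFun (heat_zero G f) v]
    ring
  have hident : ∀ s : ℝ, ∑ v, (-(lap G (heat G s f) v)) * g v
      = ∑ v, gam G f (heat G s g) v := by
    intro s
    have h2 : ∑ v, gam G (heat G s f) g v = ∑ v, gam G f (heat G s g) v := by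
      calc ∑ v, gam G (heat G s f) g v = -∑ v, lap G (heat G s f) v * g v := by
            rw [sum_lap_mul]; ring
        _ = -∑ v, heat G s (lap G f) v * g v := by
            congr 1
            exact Finset.sum_congr rfl fun v _ => by rw [heat_lap_comm]
        _ = -∑ v, lap G f v * heat G s g v := by rw [heat_symm_sum]
        _ = ∑ v, gam G f (heat G s g) v := by rw [sum_lap_mul]; ring
    have h3 : ∑ v, (-(lap G (heat G s f) v)) * g v
        = -∑ v, lap G (heat G s f) v * g v := by
      rw [← Finset.sum_neg_distrib]
      exact Finset.sum_congr rfl fun v _ => by ring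
    rw [h3, sum_lap_mul, neg_neg, h2]
  have hswap : ∑ v, |f v - heat G t f v|
      = ∫ s in (0:ℝ)..t, ∑ v, (-(lap G (heat G s f) v)) * g v := by
    rw [intervalIntegral.integral_finset_sum (f := fun v s => (-(lap G (heat G s f) v)) * g v)
      (fun v _ => (((hcont_lap v).neg.mul continuous_const).intervalIntegrable 0 t))]
    exact Finset.sum_congr rfl fun v _ => by rw [habs v, hFTCv v]
  set C := ∑ v, Real.sqrt (gam G f f v) with hC
  have hCnn : 0 ≤ C := Finset.sum_nonneg fun v _ => Real.sqrt_nonneg _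
  have hH : ∀ s ∈ Set.Ioc (0:ℝ) t, ∑ v, (-(lap G (heat G s f) v)) * g v
      ≤ C * s ^ (-(1/2) : ℝ) := by
    intro s hs
    rw [hident s]
    have hsle : -(1/2 : ℝ) ≤ K * s := by
      rcases le_or_gt 0 K with hK | hK
      · nlinarith [hs.1.le]
      · have h1 := ht1 hK
        have hKpos : 0 < |K| := abs_pos.mpr hK.ne
        have habsK : |K| = -K := abs_of_neg hK
        rw [le_div_iff₀ (by positivity)] at h1
        have h3 : |K| * s ≤ 1/2 := by nlinarith [hs.2]
        nlinarith
    have hb := key_bound G K hric g hg1 hs.1 hsle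
    have hsqrt : Real.sqrt (1/s) = s ^ (-(1/2) : ℝ) := by
      rw [Real.sqrt_eq_rpow, one_div, Real.inv_rpow hs.1.le, ← Real.rpow_neg hs.1.le]
    calc ∑ v, gam G f (heat G s g) v
        ≤ ∑ v, Real.sqrt (gam G f f v) * Real.sqrt (gam G (heat G s g) (heat G s g) v) :=
          Finset.sum_le_sum fun v _ => gam_CS G f (heat G s g) v
      _ ≤ ∑ v, Real.sqrt (gam G f f v) * Real.sqrt (1/s) := by
          refine Finset.sum_le_sum fun v _ => ?_
          exact mul_le_mul_of_nonneg_left (Real.sqrt_le_sqrt (hb v)) (Real.sqrt_nonneg _)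
      _ = C * Real.sqrt (1/s) := by rw [hC, ← Finset.sum_mul]
      _ = C * s ^ (-(1/2) : ℝ) := by rw [hsqrt]
  have hint1 : IntervalIntegrable (fun s => ∑ v, (-(lap G (heat G s f) v)) * g v) MeasureTheory.volume 0 t :=
    (continuous_finset_sum _ fun v _ => (hcont_lap v).neg.mul continuous_const).intervalIntegrable 0 t
  have hint2 : IntervalIntegrable (fun s : ℝ => C * s ^ (-(1/2):ℝ)) MeasureTheory.volume 0 t :=
    (intervalIntegral.intervalIntegrable_rpow' (by norm_num)).const_mul C
  have hae : (fun s => ∑ v, (-(lap G (heat G s f) v)) * g v)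
      ≤ᵐ[MeasureTheory.volume.restrict (Set.Icc 0 t)] fun s : ℝ => C * s ^ (-(1/2):ℝ) := by
    have hne : ∀ᵐ s ∂(MeasureTheory.volume.restrict (Set.Icc (0:ℝ) t)), s ≠ 0 := by
      refine MeasureTheory.ae_restrict_of_ae ?_
      have : MeasureTheory.volume ({(0:ℝ)}) = 0 := Real.volume_singleton
      exact MeasureTheory.ae_iff.mpr (by simpa using this)
    have hmem : ∀ᵐ (s : ℝ) ∂MeasureTheory.volume.restrict (Set.Icc (0:ℝ) t), s ∈ Set.Icc (0:ℝ) t :=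
      MeasureTheory.ae_restrict_mem measurableSet_Icc
    filter_upwards [hne, hmem] with s hs0 hsI
    exact hH s ⟨lt_of_le_of_ne hsI.1 (Ne.symm hs0), hsI.2⟩
  have hmono := intervalIntegral.integral_mono_ae_restrict ht0 hint1 hint2 hae
  have hval : ∫ s in (0:ℝ)..t, C * s ^ (-(1/2):ℝ) = C * (2 * Real.sqrt t) := by
    rw [intervalIntegral.integral_const_mul]
    congr 1
    rw [integral_rpow (Or.inl (by norm_num))]
    rw [show -(1/2 : ℝ) + 1 = 1/2 by norm_num]
    rw [Real.zero_rpow (by norm_num), Real.sqrt_eq_rpow]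
    ring
  rw [hswap]
  calc ∫ s in (0:ℝ)..t, ∑ v, (-(lap G (heat G s f) v)) * g v
      ≤ ∫ s in (0:ℝ)..t, C * s ^ (-(1/2):ℝ) := hmono
    _ = C * (2 * Real.sqrt t) := hval
    _ = 2 * Real.sqrt t * C := by ring
end
end

section
/- Let G=(V,E) be a finite graph with Ric(G) ≥ K for some K ∈ ℝ, and let P_t = exp(tΔ) be the heat semigroup. Then for every f:V→ℝ, every t ≥ 0, and every x∈V, Γ(P_t f)(x) ≤ e^{−2Kt} · P_t(Γ(f))(x). -/
noncomputable section
open Matrix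

set_option linter.unusedSectionVars false
set_option maxHeartbeats 1000000

namespace GammaHeatAux
open NormedSpace

variable {V : Type*} [Fintype V] [DecidableEq V]

open Classical in
lemma lap_eq (G : SimpleGraph V) (f : V → ℝ) (x : V) :
    lap G f x = ∑ y ∈ Finset.univ.filter (fun y => G.Adj x y), (f y - f x) := by
  rw [lap, ← finsum_mem_coe_finset]
  congr 1
  ext y; simp

open Classical in
lemma gam_eq (G : SimpleGraph V) (f g : V → ℝ) (x : V) :
    gam G f g x
      = (1/2) * ∑ y ∈ Finset.univ.filter (fun y => G.Adj x y), (f x - f y) * (g x - g y) := by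
  rw [gam, ← finsum_mem_coe_finset]
  congr 2
  ext y; simp

open Classical in
lemma lapMat_mulVec (G : SimpleGraph V) (f : V → ℝ) (x : V) :
    (lapMat G *ᵥ f) x = lap G f x := by
  rw [lap_eq]
  simp only [mulVec, dotProduct, lapMat, Matrix.of_apply, sub_mul, ite_mul, one_mul, zero_mul]
  rw [Finset.sum_sub_distrib, Finset.sum_sub_distrib, Finset.sum_ite_eq, Finset.sum_const,
    nsmul_eq_mul, ← Finset.sum_filter]
  simp [degC, mul_comm]

lemma entry_norm_le (A : Matrix V V ℝ) (i j : V) :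
    ‖A i j‖ ≤ @norm _ (Matrix.linftyOpNormedAddCommGroup.toNorm) A := by
  letI := Matrix.linftyOpNormedAddCommGroup (m := V) (n := V) (α := ℝ)
  rw [← coe_nnnorm, ← coe_nnnorm, NNReal.coe_le_coe, Matrix.linfty_opNNNorm_def]
  refine le_trans (Finset.single_le_sum (f := fun k => ‖A i k‖₊) (fun k _ => zero_le)
    (Finset.mem_univ j)) ?_
  exact Finset.le_sup (f := fun a => ∑ k, ‖A a k‖₊) (Finset.mem_univ i)

lemma hasDerivAt_expEntry (L : Matrix V V ℝ) (v w : V) (s : ℝ) :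
    HasDerivAt (fun u : ℝ => exp (u • L) v w) ((L * exp (s • L)) v w) s := by
  letI : SeminormedRing (Matrix V V ℝ) := Matrix.linftyOpSemiNormedRing
  letI : NormedRing (Matrix V V ℝ) := Matrix.linftyOpNormedRing
  letI : NormedAlgebra ℝ (Matrix V V ℝ) := Matrix.linftyOpNormedAlgebra
  have h : HasDerivAt (fun u : ℝ => exp (u • L)) (L * exp (s • L)) s :=
    hasDerivAt_exp_smul_const' L s
  replace h := hasDerivAt_iff_tendsto.mp h
  rw [hasDerivAt_iff_tendsto]
  refine squeeze_zero (fun u => by positivity) (fun u => ?_) h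
  refine mul_le_mul_of_nonneg_left ?_ (by positivity)
  have : exp (u • L) v w - exp (s • L) v w - (u - s) • (L * exp (s • L)) v w
      = (exp (u • L) - exp (s • L) - (u - s) • (L * exp (s • L))) v w := by
    simp [Matrix.sub_apply]
  rw [this]
  exact entry_norm_le _ v w

lemma exp_entry_nonneg (M : Matrix V V ℝ) (hM : ∀ i j, 0 ≤ M i j) (i j : V) :
    0 ≤ exp M i j := by
  have key : HasSum (fun n : ℕ => ((Nat.factorial n : ℝ))⁻¹ • M ^ n) (exp M) := by
    letI : SeminormedRing (Matrix V V ℝ) := Matrix.linftyOpSemiNormedRing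
    letI : NormedRing (Matrix V V ℝ) := Matrix.linftyOpNormedRing
    letI : NormedAlgebra ℝ (Matrix V V ℝ) := Matrix.linftyOpNormedAlgebra
    exact exp_series_hasSum_exp' M
  have hcont : Continuous fun A : Matrix V V ℝ => A i j := by
    exact (continuous_apply j).comp (continuous_apply i)
  have h2 : HasSum (fun n : ℕ => (((Nat.factorial n : ℝ))⁻¹ • M ^ n) i j) (exp M i j) :=
    key.map (AddMonoidHom.mk' (fun A : Matrix V V ℝ => A i j) (fun A B => rfl)) hcont
  have hpow : ∀ n : ℕ, ∀ a b : V, 0 ≤ (M ^ n) a b := by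
    intro n
    induction n with
    | zero => intro a b; rw [pow_zero]; by_cases h : a = b <;> simp [Matrix.one_apply, h]
    | succ n ih =>
      intro a b
      rw [pow_succ, Matrix.mul_apply]
      exact Finset.sum_nonneg fun k _ => mul_nonneg (ih a k) (hM k b)
  rw [← h2.tsum_eq]
  refine tsum_nonneg fun n => ?_
  have : (((Nat.factorial n : ℝ))⁻¹ • M ^ n) i j = ((Nat.factorial n : ℝ))⁻¹ * (M ^ n) i j := rfl
  rw [this]
  exact mul_nonneg (by positivity) (hpow n i j)

lemma exp_smul_one (c : ℝ) :
    exp (c • (1 : Matrix V V ℝ)) = Real.exp c • (1 : Matrix V V ℝ) := by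
  have h1 : c • (1 : Matrix V V ℝ) = algebraMap ℝ (Matrix V V ℝ) c :=
    (Algebra.algebraMap_eq_smul_one c).symm
  have h2 : exp (algebraMap ℝ (Matrix V V ℝ) c) = algebraMap ℝ (Matrix V V ℝ) (exp c) := by
    letI : SeminormedRing (Matrix V V ℝ) := Matrix.linftyOpSemiNormedRing
    letI : NormedRing (Matrix V V ℝ) := Matrix.linftyOpNormedRing
    letI : NormedAlgebra ℝ (Matrix V V ℝ) := Matrix.linftyOpNormedAlgebra
    exact (algebraMap_exp_comm c).symm
  rw [h1, h2, ← Real.exp_eq_exp_ℝ, Algebra.algebraMap_eq_smul_one]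

lemma expMat_entry_nonneg (G : SimpleGraph V) {s : ℝ} (hs : 0 ≤ s) (i j : V) :
    0 ≤ exp (s • lapMat G) i j := by
  classical
  set c : ℝ := s * (Finset.univ.sup (degC G) : ℕ) with hc
  have hM : ∀ a b, 0 ≤ (s • lapMat G + c • (1 : Matrix V V ℝ)) a b := by
    intro a b
    by_cases hab : a = b
    · subst hab
      have hd : (degC G a : ℝ) ≤ (Finset.univ.sup (degC G) : ℕ) := by
        exact Nat.cast_le.mpr (Finset.le_sup (Finset.mem_univ a))
      simp [lapMat, Matrix.one_apply, SimpleGraph.irrefl, hc]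
      nlinarith
    · have : (1 : Matrix V V ℝ) a b = 0 := Matrix.one_apply_ne hab
      simp [lapMat, Matrix.one_apply, hab, this]
      split_ifs <;> positivity
  have hsplit : s • lapMat G = (s • lapMat G + c • (1 : Matrix V V ℝ)) + (-c) • 1 := by
    rw [add_assoc, ← add_smul]; simp
  have hcomm : Commute (s • lapMat G + c • (1 : Matrix V V ℝ)) ((-c) • (1 : Matrix V V ℝ)) :=
    ((Commute.one_right _).smul_right (-c))
  rw [hsplit, Matrix.exp_add_of_commute _ _ hcomm, exp_smul_one]
  have : (exp (s • lapMat G + c • (1 : Matrix V V ℝ)) * (Real.exp (-c) • 1)) i j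
      = Real.exp (-c) * exp (s • lapMat G + c • (1 : Matrix V V ℝ)) i j := by
    rw [mul_smul_comm, mul_one, Matrix.smul_apply, smul_eq_mul]
  rw [this]
  exact mul_nonneg (Real.exp_nonneg _) (exp_entry_nonneg _ hM i j)

lemma hasDerivAt_exp_mulVec (L : Matrix V V ℝ) (c : V → ℝ) (v : V) (s : ℝ) :
    HasDerivAt (fun u : ℝ => (exp (u • L) *ᵥ c) v) (((L * exp (s • L)) *ᵥ c) v) s := by
  simp only [mulVec, dotProduct]
  exact HasDerivAt.fun_sum fun w _ => (hasDerivAt_expEntry L v w s).mul_const (c w)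

lemma hasDerivAt_heat (G : SimpleGraph V) (f : V → ℝ) (v : V) (r : ℝ) :
    HasDerivAt (fun u : ℝ => heat G u f v) (lap G (heat G r f) v) r := by
  have h := hasDerivAt_exp_mulVec (lapMat G) f v r
  have : ((lapMat G * exp (r • lapMat G)) *ᵥ f) v = lap G (heat G r f) v := by
    rw [← Matrix.mulVec_mulVec, lapMat_mulVec]
    rfl
  rw [this] at h
  exact h

lemma hasDerivAt_heat_rev (G : SimpleGraph V) (f : V → ℝ) (t : ℝ) (v : V) (s : ℝ) :
    HasDerivAt (fun u : ℝ => heat G (t - u) f v) (-(lap G (heat G (t - s) f) v)) s := by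
  have h1 : HasDerivAt (fun u : ℝ => t - u) (-1) s := by
    simpa using (hasDerivAt_id s).const_sub t
  have h2 := (hasDerivAt_heat G f v (t - s)).comp s h1
  simpa [mul_comm, Function.comp_def] using h2

open Classical in
lemma hasDerivAt_gam (G : SimpleGraph V) (a : ℝ → V → ℝ) (a' : V → ℝ) (s : ℝ) (y : V)
    (ha : ∀ v, HasDerivAt (fun u => a u v) (a' v) s) :
    HasDerivAt (fun u => gam G (a u) (a u) y) (2 * gam G (a s) a' y) s := by
  have h : HasDerivAt
      (fun u => (1/2 : ℝ) * ∑ z ∈ Finset.univ.filter (fun z => G.Adj y z),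
        (a u y - a u z) * (a u y - a u z))
      ((1/2 : ℝ) * ∑ z ∈ Finset.univ.filter (fun z => G.Adj y z),
        ((a' y - a' z) * (a s y - a s z) + (a s y - a s z) * (a' y - a' z))) s := by
    exact (HasDerivAt.fun_sum fun z _ =>
      (((ha y).sub (ha z)).mul ((ha y).sub (ha z)))).const_mul (1/2 : ℝ)
  have heq : (fun u => gam G (a u) (a u) y)
      = fun u => (1/2 : ℝ) * ∑ z ∈ Finset.univ.filter (fun z => G.Adj y z),
          (a u y - a u z) * (a u y - a u z) := by
    funext u
    rw [gam_eq]
  rw [heq]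
  convert h using 1
  rw [gam_eq, Finset.mul_sum, Finset.mul_sum, Finset.mul_sum]
  exact Finset.sum_congr rfl fun z _ => by ring

open Classical in
lemma gam_neg_right (G : SimpleGraph V) (p q : V → ℝ) (y : V) :
    gam G p (fun v => -(q v)) y = -(gam G p q y) := by
  rw [gam_eq, gam_eq, neg_mul_eq_mul_neg, ← Finset.sum_neg_distrib]
  exact congrArg _ (Finset.sum_congr rfl fun z _ => by ring)

end GammaHeatAux

open GammaHeatAux NormedSpace in
/-- if `Ric(G) ≥ K` then `Γ(P_t f) ≤ e^{-2Kt} P_t(Γ(f))` pointwise,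
for all `t ≥ 0`. -/
theorem gamma_heat_estimate {V : Type*} [Fintype V] [DecidableEq V] (G : SimpleGraph V)
    (K : ℝ) (hric : RicGE G K) (f : V → ℝ) (t : ℝ) (ht : 0 ≤ t) (x : V) :
    gam G (heat G t f) (heat G t f) x
      ≤ Real.exp (-2 * K * t) * heat G t (fun v => gam G f f v) x := by
  classical
  set L := lapMat G with hLdef
  set φ : ℝ → ℝ := fun s => Real.exp (-2*K*s) *
      ((exp (s • L)) *ᵥ (fun v => gam G (heat G (t-s) f) (heat G (t-s) f) v)) x with hφdef
  have hder : ∀ s : ℝ, HasDerivAt φ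
      (Real.exp (-2*K*s) * ∑ y, exp (s • L) x y *
        (2 * (gam2 G (heat G (t-s) f) y
          - K * gam G (heat G (t-s) f) (heat G (t-s) f) y))) s := by
    intro s
    have he : HasDerivAt (fun s0 : ℝ => Real.exp (-2*K*s0)) (Real.exp (-2*K*s) * (-2*K)) s := by
      simpa using ((hasDerivAt_id s).const_mul (-2*K)).exp
    have hψ : HasDerivAt (fun s0 : ℝ =>
        ((exp (s0 • L)) *ᵥ (fun v => gam G (heat G (t-s0) f) (heat G (t-s0) f) v)) x)
        (∑ y, ((L * exp (s • L)) x y * gam G (heat G (t-s) f) (heat G (t-s) f) y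
          + exp (s • L) x y *
            (2 * gam G (heat G (t-s) f) (fun v => -(lap G (heat G (t-s) f) v)) y))) s := by
      simp only [mulVec, dotProduct]
      refine HasDerivAt.fun_sum fun y _ => ?_
      exact (hasDerivAt_expEntry L x y s).mul
        (hasDerivAt_gam G (fun u => heat G (t-u) f) (fun v => -(lap G (heat G (t-s) f) v)) s y
          (fun v => hasDerivAt_heat_rev G f t v s))
    have h := he.fun_mul hψ
    refine h.congr_deriv (Eq.symm ?_)
    have hmv : ((exp (s • L)) *ᵥ (fun v => gam G (heat G (t-s) f) (heat G (t-s) f) v)) x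
        = ∑ y, exp (s • L) x y * gam G (heat G (t-s) f) (heat G (t-s) f) y := rfl
    have hcomm : L * exp (s • L) = exp (s • L) * L :=
      (((Commute.refl L).smul_right s).exp_right).eq
    have hcl : ∑ y, (L * exp (s • L)) x y * gam G (heat G (t-s) f) (heat G (t-s) f) y
        = ∑ y, exp (s • L) x y
            * lap G (fun v => gam G (heat G (t-s) f) (heat G (t-s) f) v) y := by
      have e1 : ∑ y, (L * exp (s • L)) x y * gam G (heat G (t-s) f) (heat G (t-s) f) y
          = ((exp (s • L) * L) *ᵥ (fun v => gam G (heat G (t-s) f) (heat G (t-s) f) v)) x := by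
        rw [← hcomm]; rfl
      rw [e1, ← Matrix.mulVec_mulVec]
      refine Finset.sum_congr rfl fun y _ => ?_
      rw [lapMat_mulVec]
    simp only [gam_neg_right]
    rw [hmv, Finset.sum_add_distrib, hcl]
    rw [Finset.mul_sum, Finset.mul_sum, mul_add, Finset.mul_sum, Finset.mul_sum,
      ← Finset.sum_add_distrib, ← Finset.sum_add_distrib]
    refine Finset.sum_congr rfl fun y _ => ?_
    simp only [gam2]
    ring
  have hcont : Continuous φ := by
    have : Differentiable ℝ φ := fun s => (hder s).differentiableAt
    exact this.continuous
  have hmono : MonotoneOn φ (Set.Icc 0 t) := by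
    refine monotoneOn_of_deriv_nonneg (convex_Icc 0 t) hcont.continuousOn
      (fun s _ => ((hder s).differentiableAt).differentiableWithinAt) (fun s hs => ?_)
    rw [interior_Icc] at hs
    rw [(hder s).deriv]
    refine mul_nonneg (Real.exp_nonneg _)
      (Finset.sum_nonneg fun y _ => mul_nonneg (expMat_entry_nonneg G hs.1.le x y) ?_)
    have hb := hric (heat G (t-s) f) y
    linarith
  have hkey := hmono (Set.left_mem_Icc.mpr ht) (Set.right_mem_Icc.mpr ht) ht
  have hexp0 : exp ((0:ℝ) • L) = (1 : Matrix V V ℝ) := by rw [zero_smul, exp_zero]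
  have hu0 : heat G (0:ℝ) f = f := by
    show exp ((0:ℝ) • lapMat G) *ᵥ f = f
    rw [zero_smul, exp_zero, Matrix.one_mulVec]
  have hφ0 : φ 0 = gam G (heat G t f) (heat G t f) x := by
    show Real.exp (-2*K*0) *
      ((exp ((0:ℝ) • L)) *ᵥ (fun v => gam G (heat G (t-0) f) (heat G (t-0) f) v)) x = _
    rw [hexp0, Matrix.one_mulVec]
    norm_num
  have hφt : φ t = Real.exp (-2 * K * t) * heat G t (fun v => gam G f f v) x := by
    show Real.exp (-2*K*t) *
      ((exp (t • L)) *ᵥ (fun v => gam G (heat G (t-t) f) (heat G (t-t) f) v)) x = _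
    rw [sub_self, hu0]
    rfl
  rw [← hφ0, ← hφt]
  exact hkey
end
end

section
/- Let G=(V,E) be a finite graph with Ric(G) ≥ K for some K ∈ ℝ, and let P_t = exp(tΔ) be the heat semigroup. Then for every f:V→ℝ, every t ≥ 0, and every x∈V, P_t(f²)(x) − (P_t f)²(x) ≥ c_K(t)·Γ(P_t f)(x), where c_K(t) = ∫₀ᵗ 2e^{2Ks} ds (so c_K(t) = (e^{2Kt}−1)/K for K ≠ 0 and c_0(t) = 2t). -/
noncomputable section
open Matrix

section Aux
set_option linter.unusedSectionVars false
variable {V : Type*} [Fintype V] [DecidableEq V] (G : SimpleGraph V)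

open Classical in
lemma adj_coe (x : V) : {y | G.Adj x y} = ↑(Finset.univ.filter fun y => G.Adj x y) := by
  ext y; simp

open Classical in
lemma lap_eq_sum (g : V → ℝ) (x : V) :
    lap G g x = ∑ y ∈ Finset.univ.filter (fun y => G.Adj x y), (g y - g x) := by
  rw [lap, adj_coe, finsum_mem_coe_finset]

open Classical in
lemma gam_eq_sum (f g : V → ℝ) (x : V) :
    gam G f g x
      = (1/2) * ∑ y ∈ Finset.univ.filter (fun y => G.Adj x y), (f x - f y) * (g x - g y) := by
  rw [gam, adj_coe, finsum_mem_coe_finset]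

open Classical in
lemma lap_eq_mulVec (g : V → ℝ) (x : V) : lap G g x = (lapMat G *ᵥ g) x := by
  rw [lap_eq_sum, Finset.sum_sub_distrib, Finset.sum_const, Finset.sum_filter]
  simp only [lapMat, Matrix.mulVec, dotProduct, Matrix.of_apply, sub_mul, ite_mul,
    one_mul, zero_mul, Finset.sum_sub_distrib, Finset.sum_ite_eq, Finset.mem_univ, if_true,
    degC, nsmul_eq_mul]

lemma gam_neg_right (f g : V → ℝ) (x : V) :
    gam G f (fun v => -(g v)) x = -(gam G f g x) := by
  classical
  rw [gam_eq_sum, gam_eq_sum, neg_mul_eq_mul_neg, ← Finset.sum_neg_distrib]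
  congr 1
  exact Finset.sum_congr rfl fun y _ => by ring

open Classical in
lemma lap_sq (h : V → ℝ) (x : V) :
    lap G (fun v => h v ^ 2) x = 2 * h x * lap G h x + 2 * gam G h h x := by
  rw [lap_eq_sum, lap_eq_sum, gam_eq_sum]
  simp only [Finset.mul_sum]
  rw [← Finset.sum_add_distrib]
  exact Finset.sum_congr rfl fun y _ => by ring
end Aux

section Core
open NormedSpace
attribute [local instance] Matrix.linftyOpNormedRing Matrix.linftyOpNormedAlgebra
set_option linter.unusedSectionVars false
variable {V : Type*} [Fintype V] [DecidableEq V] (G : SimpleGraph V)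

lemma exp_add_smul (a b : ℝ) (L : Matrix V V ℝ) :
    exp ((a + b) • L) = exp (a • L) * exp (b • L) := by
  rw [add_smul]
  exact exp_add_of_commute (((Commute.refl L).smul_left a).smul_right b)

lemma exp_comm (u : ℝ) (L : Matrix V V ℝ) :
    L * exp (u • L) = exp (u • L) * L :=
  (((Commute.refl L).smul_right u).exp_right).eq

def entryCLM (x y : V) : Matrix V V ℝ →L[ℝ] ℝ :=
  LinearMap.toContinuousLinearMap (Matrix.entryLinearMap ℝ ℝ x y)

lemma hasDerivAt_exp_entry (L : Matrix V V ℝ) (u : ℝ) (x y : V) :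
    HasDerivAt (fun r : ℝ => exp (r • L) x y) ((L * exp (u • L)) x y) u := by
  have h1 : HasDerivAt (fun r : ℝ => exp (r • L)) (L * exp (u • L)) u :=
    hasDerivAt_exp_smul_const' L u
  exact ((entryCLM x y).hasFDerivAt.comp_hasDerivAt u h1)

lemma exp_entry_nonneg {N : Matrix V V ℝ} (hN : ∀ x y, 0 ≤ N x y) (x y : V) :
    0 ≤ exp N x y := by
  have hpow : ∀ n : ℕ, ∀ x y, 0 ≤ (N ^ n) x y := by
    intro n
    induction n with
    | zero => intro x y; by_cases h : x = y <;> simp [pow_zero, Matrix.one_apply, h]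
    | succ n ih =>
      intro x y
      rw [pow_succ, Matrix.mul_apply]
      exact Finset.sum_nonneg fun z _ => mul_nonneg (ih x z) (hN z y)
  have hsum : Summable fun n : ℕ => ((n.factorial : ℝ))⁻¹ • N ^ n := expSeries_summable' N
  have : exp N x y = ∑' n : ℕ, ((n.factorial : ℝ))⁻¹ • (N ^ n) x y := by
    rw [exp_eq_tsum ℝ]
    exact ((entryCLM x y).map_tsum hsum).trans (by simp [entryCLM])
  rw [this]
  exact tsum_nonneg fun n => smul_nonneg (by positivity) (hpow n x y)

lemma exp_lap_entry_nonneg {u : ℝ} (hu : 0 ≤ u) (x y : V) :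
    0 ≤ exp (u • lapMat G) x y := by
  set c : ℝ := (Fintype.card V : ℝ) with hc
  set N : Matrix V V ℝ := u • lapMat G + (u * c) • 1 with hNdef
  have hNnn : ∀ x y, 0 ≤ N x y := by
    intro x y
    classical
    have hdeg : (degC G x : ℝ) ≤ c := by
      rw [hc]; exact_mod_cast Finset.card_filter_le _ _
    simp only [hNdef, Matrix.add_apply, Matrix.smul_apply, Matrix.one_apply, lapMat,
      Matrix.of_apply, smul_eq_mul]
    by_cases hxy : x = y
    · subst hxy
      simp [SimpleGraph.irrefl]
      nlinarith
    · simp [hxy]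
      split <;> nlinarith
  have hsplit : u • lapMat G = N + (-(u * c)) • 1 := by
    rw [hNdef]; module
  have hcomm : Commute N ((-(u * c)) • (1 : Matrix V V ℝ)) :=
    ((Commute.one_right N).smul_right _)
  have h1 : exp ((-(u*c)) • (1 : Matrix V V ℝ)) = Real.exp (-(u*c)) • 1 := by
    rw [← Algebra.algebraMap_eq_smul_one]
    erw [← algebraMap_exp_comm]
    rw [← Real.exp_eq_exp_ℝ,
      Algebra.algebraMap_eq_smul_one]
  have : exp (u • lapMat G) = Real.exp (-(u*c)) • exp N := by
    rw [hsplit, Matrix.exp_add_of_commute _ _ hcomm, h1, Matrix.mul_smul, Matrix.mul_one]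
  rw [this, Matrix.smul_apply, smul_eq_mul]
  exact mul_nonneg (Real.exp_nonneg _) (exp_entry_nonneg hNnn x y)

lemma mulVec_apply (M : Matrix V V ℝ) (v : V → ℝ) (x : V) :
    (M *ᵥ v) x = ∑ y, M x y * v y := rfl

lemma heat_mono {u : ℝ} (hu : 0 ≤ u) {a b : V → ℝ} (hab : ∀ v, a v ≤ b v) (x : V) :
    (exp (u • lapMat G) *ᵥ a) x ≤ (exp (u • lapMat G) *ᵥ b) x := by
  rw [_root_.mulVec_apply, _root_.mulVec_apply]
  exact Finset.sum_le_sum fun y _ =>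
    mul_le_mul_of_nonneg_left (hab y) (exp_lap_entry_nonneg G hu x y)

lemma heat_smul (cst : ℝ) (a : V → ℝ) (u : ℝ) (x : V) :
    (exp (u • lapMat G) *ᵥ fun v => cst * a v) x
      = cst * (exp (u • lapMat G) *ᵥ a) x := by
  rw [_root_.mulVec_apply, _root_.mulVec_apply, Finset.mul_sum]
  exact Finset.sum_congr rfl fun y _ => by ring

/-- master derivative lemma: heat flow with a time-dependent source. -/
lemma hasDerivAt_heat_apply {w : ℝ → V → ℝ} {w' : V → ℝ} {u : ℝ}
    (hw : ∀ v, HasDerivAt (fun r => w r v) (w' v) u) (x : V) :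
    HasDerivAt (fun r : ℝ => (exp (r • lapMat G) *ᵥ w r) x)
      ((exp (u • lapMat G) *ᵥ fun v => lap G (w u) v + w' v) x) u := by
  set L := lapMat G
  have h : HasDerivAt (fun r : ℝ => ∑ y, exp (r • L) x y * w r y)
      (∑ y, ((L * exp (u • L)) x y * w u y + exp (u • L) x y * w' y)) u :=
    HasDerivAt.fun_sum fun y _ => (hasDerivAt_exp_entry L u x y).mul (hw y)
  have hval : (exp (u • L) *ᵥ fun v => lap G (w u) v + w' v) x
      = ∑ y, ((L * exp (u • L)) x y * w u y + exp (u • L) x y * w' y) := by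
    have h2 : (fun v => lap G (w u) v + w' v) = (L *ᵥ w u) + w' :=
      funext fun v => by rw [lap_eq_mulVec]; rfl
    rw [h2, Matrix.mulVec_add, Finset.sum_add_distrib, Pi.add_apply,
      Matrix.mulVec_mulVec, ← exp_comm, _root_.mulVec_apply, _root_.mulVec_apply]
  have h' := h
  rw [← hval] at h'
  exact h'

/-- derivative of the backward heat flow entry. -/
lemma hasDerivAt_heatRev (h : V → ℝ) (s u : ℝ) (v : V) :
    HasDerivAt (fun r : ℝ => (exp ((s - r) • lapMat G) *ᵥ h) v)
      (-(lap G (fun z => (exp ((s - u) • lapMat G) *ᵥ h) z) v)) u := by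
  set L := lapMat G
  have hlin : HasDerivAt (fun r : ℝ => s - r) (-1) u := by
    simpa [Pi.sub_def] using (hasDerivAt_const u s).sub (hasDerivAt_id u)
  have h1 : ∀ z, HasDerivAt (fun r : ℝ => exp ((s - r) • L) v z)
      (-((L * exp ((s - u) • L)) v z)) u := by
    intro z
    have := (hasDerivAt_exp_entry L (s - u) v z).comp u hlin
    simpa [Function.comp_def] using this
  have h2 : HasDerivAt (fun r : ℝ => ∑ z, exp ((s - r) • L) v z * h z)
      (∑ z, -((L * exp ((s - u) • L)) v z) * h z) u :=
    HasDerivAt.fun_sum fun z _ => (h1 z).mul_const (h z)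
  have h3 : (∑ z, -((L * exp ((s - u) • L)) v z) * h z)
      = -(lap G (fun z => (exp ((s - u) • L) *ᵥ h) z) v) := by
    have : (fun z => (exp ((s - u) • L) *ᵥ h) z) = exp ((s - u) • L) *ᵥ h := rfl
    rw [this, lap_eq_mulVec, Matrix.mulVec_mulVec, _root_.mulVec_apply, ← Finset.sum_neg_distrib]
    exact Finset.sum_congr rfl fun z _ => by ring
  rw [h3] at h2
  exact h2
end Core

section Core2
open NormedSpace
attribute [local instance] Matrix.linftyOpNormedRing Matrix.linftyOpNormedAlgebra
set_option linter.unusedSectionVars false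
variable {V : Type*} [Fintype V] [DecidableEq V] (G : SimpleGraph V)

open Classical in
lemma hasDerivAt_gam {g : ℝ → V → ℝ} {g' : V → ℝ} {u : ℝ}
    (hg : ∀ v, HasDerivAt (fun r => g r v) (g' v) u) (y : V) :
    HasDerivAt (fun r => gam G (g r) (g r) y) (2 * gam G (g u) g' y) u := by
  have h : HasDerivAt (fun r => (1/2 : ℝ) *
      ∑ z ∈ Finset.univ.filter (fun z => G.Adj y z), (g r y - g r z) * (g r y - g r z))
      ((1/2 : ℝ) * ∑ z ∈ Finset.univ.filter (fun z => G.Adj y z),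
        ((g' y - g' z) * (g u y - g u z) + (g u y - g u z) * (g' y - g' z))) u :=
    (HasDerivAt.fun_sum fun z _ => ((hg y).sub (hg z)).mul ((hg y).sub (hg z))).const_mul _
  have hfun : (fun r => gam G (g r) (g r) y) = fun r => (1/2 : ℝ) *
      ∑ z ∈ Finset.univ.filter (fun z => G.Adj y z), (g r y - g r z) * (g r y - g r z) :=
    funext fun r => gam_eq_sum G (g r) (g r) y
  have hval : 2 * gam G (g u) g' y = (1/2 : ℝ) *
      ∑ z ∈ Finset.univ.filter (fun z => G.Adj y z),
        ((g' y - g' z) * (g u y - g u z) + (g u y - g u z) * (g' y - g' z)) := by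
    rw [gam_eq_sum]
    simp only [Finset.mul_sum]
    exact Finset.sum_congr rfl fun z _ => by ring
  rw [hfun, hval]
  exact h

/-- Lemma A: the gradient estimate `e^{2Ks} Γ(P_s h) ≤ P_s Γ(h)`. -/
lemma gradient_estimate_s16 {K : ℝ} (hric : RicGE G K) (h : V → ℝ) {s : ℝ} (hs : 0 ≤ s) (x : V) :
    Real.exp (2*K*s) * gam G (exp (s • lapMat G) *ᵥ h) (exp (s • lapMat G) *ᵥ h) x
      ≤ (exp (s • lapMat G) *ᵥ fun v => gam G h h v) x := by
  set L := lapMat G with hL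
  set g : ℝ → V → ℝ := fun u => exp ((s - u) • L) *ᵥ h with hg
  set F : ℝ → ℝ := fun u => (exp (u • L) *ᵥ fun v => gam G (g u) (g u) v) x with hF
  -- derivative of F
  have hF' : ∀ u : ℝ, HasDerivAt F
      ((exp (u • L) *ᵥ fun v => 2 * gam2 G (g u) v) x) u := by
    intro u
    have hgd : ∀ v, HasDerivAt (fun r => g r v) (-(lap G (g u) v)) u := fun v =>
      hasDerivAt_heatRev G h s u v
    have hΓ : ∀ v, HasDerivAt (fun r => gam G (g r) (g r) v)
        (2 * gam G (g u) (fun z => -(lap G (g u) z)) v) u := fun v =>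
      hasDerivAt_gam G hgd v
    have hmaster := hasDerivAt_heat_apply G (w := fun r v => gam G (g r) (g r) v)
      (w' := fun v => 2 * gam G (g u) (fun z => -(lap G (g u) z)) v) hΓ x
    have hintegrand : (fun v => lap G (fun z => gam G (g u) (g u) z) v
        + 2 * gam G (g u) (fun z => -(lap G (g u) z)) v)
        = fun v => 2 * gam2 G (g u) v := by
      funext v
      rw [gam_neg_right, gam2]
      have : lap G (fun z => gam G (g u) (g u) z) v = lap G (gam G (g u) (g u)) v := rfl
      rw [this]; ring
    rw [← hintegrand]
    exact hmaster
  have hFd : Differentiable ℝ F := fun u => (hF' u).differentiableAt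
  -- the Grönwall function
  set Gr : ℝ → ℝ := fun u => Real.exp (-(2*K*u)) * F u with hGr
  have hGr' : ∀ u : ℝ, HasDerivAt Gr
      ((-(2*K)) * Real.exp (-(2*K*u)) * F u
        + Real.exp (-(2*K*u)) * ((exp (u • L) *ᵥ fun v => 2 * gam2 G (g u) v) x)) u := by
    intro u
    have he : HasDerivAt (fun u : ℝ => Real.exp (-(2*K*u))) ((-(2*K)) * Real.exp (-(2*K*u))) u := by
      have h1 : HasDerivAt (fun u : ℝ => -(2*K*u)) (-(2*K)) u := by
        simpa [Pi.neg_def] using ((hasDerivAt_id u).const_mul (2*K)).neg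
      simpa [mul_comm] using h1.exp
    exact he.mul (hF' u)
  have hmono : MonotoneOn Gr (Set.Icc 0 s) := by
    apply monotoneOn_of_deriv_nonneg (convex_Icc 0 s)
    · exact ((Real.continuous_exp.comp (by continuity)).mul hFd.continuous).continuousOn
    · intro u _
      exact ((hGr' u).differentiableAt).differentiableWithinAt
    · intro u hu
      rw [interior_Icc] at hu
      rw [(hGr' u).deriv]
      have hu0 : (0:ℝ) ≤ u := le_of_lt hu.1
      have hineq : 2 * K * F u ≤ (exp (u • L) *ᵥ fun v => 2 * gam2 G (g u) v) x := by
        have hpt : ∀ v, 2 * K * gam G (g u) (g u) v ≤ 2 * gam2 G (g u) v := by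
          intro v
          have := hric (g u) v
          nlinarith
        have hm := heat_mono G hu0 (a := fun v => 2 * K * gam G (g u) (g u) v)
          (b := fun v => 2 * gam2 G (g u) v) hpt x
        have hsm := heat_smul G (2*K) (fun v => gam G (g u) (g u) v) u x
        calc 2 * K * F u = (exp (u • L) *ᵥ fun v => 2 * K * gam G (g u) (g u) v) x := by
              rw [hF, hsm]
          _ ≤ _ := hm
      nlinarith [Real.exp_pos (-(2*K*u))]
  have h0s : (0:ℝ) ∈ Set.Icc (0:ℝ) s := Set.mem_Icc.2 ⟨le_refl _, hs⟩
  have hss : s ∈ Set.Icc (0:ℝ) s := Set.mem_Icc.2 ⟨hs, le_refl _⟩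
  have hfin := hmono h0s hss hs
  -- compute Gr 0 and Gr s
  have hGr0 : Gr 0 = gam G (exp (s • L) *ᵥ h) (exp (s • L) *ᵥ h) x := by
    have hg0 : g 0 = exp (s • L) *ᵥ h := by rw [hg]; norm_num
    have : F 0 = gam G (g 0) (g 0) x := by
      rw [hF]
      norm_num [zero_smul, exp_zero, Matrix.one_mulVec]
    simp [hGr, this, hg0]
  have hGrs : Gr s = Real.exp (-(2*K*s)) * (exp (s • L) *ᵥ fun v => gam G h h v) x := by
    have hgs : g s = h := by
      rw [hg]; norm_num [zero_smul, exp_zero, Matrix.one_mulVec]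
    simp [hGr, hF, hgs]
  rw [hGr0, hGrs] at hfin
  have hepos := Real.exp_pos (2*K*s)
  have hprod : Real.exp (2*K*s) * Real.exp (-(2*K*s)) = 1 := by
    rw [← Real.exp_add]; norm_num
  calc Real.exp (2*K*s) * gam G (exp (s • L) *ᵥ h) (exp (s • L) *ᵥ h) x
      ≤ Real.exp (2*K*s) * (Real.exp (-(2*K*s))
          * (exp (s • L) *ᵥ fun v => gam G h h v) x) :=
        mul_le_mul_of_nonneg_left hfin hepos.le
    _ = (exp (s • L) *ᵥ fun v => gam G h h v) x := by
        rw [← mul_assoc, hprod, one_mul]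
end Core2

section Core3
open NormedSpace
attribute [local instance] Matrix.linftyOpNormedRing Matrix.linftyOpNormedAlgebra
set_option linter.unusedSectionVars false
variable {V : Type*} [Fintype V] [DecidableEq V] (G : SimpleGraph V)

lemma main_aux {K : ℝ} (hric : RicGE G K) (f : V → ℝ) {t : ℝ} (ht : 0 ≤ t) (x : V) :
    (∫ s in (0 : ℝ)..t, 2 * Real.exp (2 * K * s))
        * gam G (exp (t • lapMat G) *ᵥ f) (exp (t • lapMat G) *ᵥ f) x
      ≤ (exp (t • lapMat G) *ᵥ fun v => f v ^ 2) x - ((exp (t • lapMat G) *ᵥ f) x) ^ 2 := by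
  set L := lapMat G with hL
  set c : ℝ := gam G (exp (t • L) *ᵥ f) (exp (t • L) *ᵥ f) x with hc
  set g : ℝ → V → ℝ := fun u => exp ((t - u) • L) *ᵥ f with hg
  set H : ℝ → ℝ := fun u => (exp (u • L) *ᵥ fun v => (g u v) ^ 2) x with hH
  have hH' : ∀ u : ℝ, HasDerivAt H
      ((exp (u • L) *ᵥ fun v => 2 * gam G (g u) (g u) v) x) u := by
    intro u
    have hgd : ∀ v, HasDerivAt (fun r => g r v) (-(lap G (g u) v)) u := fun v =>
      hasDerivAt_heatRev G f t u v
    have hsq : ∀ v, HasDerivAt (fun r => (g r v) ^ 2)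
        (2 * g u v * (-(lap G (g u) v))) u := by
      intro v
      have := (hgd v).fun_pow 2
      norm_num at this
      rw [show 2 * g u v * -lap G (g u) v = -(2 * g u v * lap G (g u) v) by ring]
      exact this
    have hmaster := hasDerivAt_heat_apply G (w := fun r v => (g r v) ^ 2)
      (w' := fun v => 2 * g u v * (-(lap G (g u) v))) hsq x
    have hintegrand : (fun v => lap G (fun z => (g u z) ^ 2) v
        + 2 * g u v * (-(lap G (g u) v))) = fun v => 2 * gam G (g u) (g u) v := by
      funext v
      rw [lap_sq]
      ring
    rw [← hintegrand]
    exact hmaster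
  have hint : Continuous fun r : ℝ => 2 * Real.exp (2 * K * r) := by continuity
  have hφ' : ∀ u : ℝ, HasDerivAt
      (fun r : ℝ => (∫ σ in (0:ℝ)..r, 2 * Real.exp (2 * K * σ)) * c)
      (2 * Real.exp (2 * K * u) * c) u := by
    intro u
    exact (intervalIntegral.integral_hasDerivAt_right (hint.intervalIntegrable 0 u)
      (hint.stronglyMeasurableAtFilter _ _) hint.continuousAt).mul_const c
  set ψ : ℝ → ℝ := fun u => H u - (∫ σ in (0:ℝ)..u, 2 * Real.exp (2 * K * σ)) * c with hψ
  have hψ' : ∀ u : ℝ, HasDerivAt ψ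
      ((exp (u • L) *ᵥ fun v => 2 * gam G (g u) (g u) v) x
        - 2 * Real.exp (2 * K * u) * c) u := fun u => (hH' u).sub (hφ' u)
  have hmono : MonotoneOn ψ (Set.Icc 0 t) := by
    apply monotoneOn_of_deriv_nonneg (convex_Icc 0 t)
    · exact (Differentiable.continuous fun u => (hψ' u).differentiableAt).continuousOn
    · intro u _
      exact ((hψ' u).differentiableAt).differentiableWithinAt
    · intro u hu
      rw [interior_Icc] at hu
      rw [(hψ' u).deriv]
      have hu0 : (0:ℝ) ≤ u := le_of_lt hu.1
      have hsemi : exp (u • L) *ᵥ g u = exp (t • L) *ᵥ f := by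
        have hut : u + (t - u) = t := by ring
        rw [hg]
        rw [Matrix.mulVec_mulVec, ← exp_add_smul, hut]
      have hge := gradient_estimate_s16 G hric (g u) hu0 x
      rw [hsemi] at hge
      have h2 : (exp (u • L) *ᵥ fun v => 2 * gam G (g u) (g u) v) x
          = 2 * ((exp (u • L) *ᵥ fun v => gam G (g u) (g u) v) x) :=
        heat_smul G 2 (fun v => gam G (g u) (g u) v) u x
      rw [h2]
      have : Real.exp (2 * K * u) * c ≤ (exp (u • L) *ᵥ fun v => gam G (g u) (g u) v) x := by
        rw [hc]; exact hge
      linarith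
  have h0t : (0:ℝ) ∈ Set.Icc (0:ℝ) t := Set.mem_Icc.2 ⟨le_refl _, ht⟩
  have htt : t ∈ Set.Icc (0:ℝ) t := Set.mem_Icc.2 ⟨ht, le_refl _⟩
  have hfin := hmono h0t htt ht
  have hψ0 : ψ 0 = ((exp (t • L) *ᵥ f) x) ^ 2 := by
    have hg0 : g 0 = exp (t • L) *ᵥ f := by rw [hg]; norm_num
    have hH0 : H 0 = ((exp (t • L) *ᵥ f) x) ^ 2 := by
      rw [hH]
      norm_num [zero_smul, exp_zero, Matrix.one_mulVec, hg0]
    simp [hψ, hH0, intervalIntegral.integral_same]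
  have hψt : ψ t = (exp (t • L) *ᵥ fun v => f v ^ 2) x
      - (∫ σ in (0:ℝ)..t, 2 * Real.exp (2 * K * σ)) * c := by
    have hgt : g t = f := by
      rw [hg]; norm_num [zero_smul, exp_zero, Matrix.one_mulVec]
    have hgt' : (fun v => g t v ^ 2) = fun v => f v ^ 2 := by rw [hgt]
    show (exp (t • L) *ᵥ fun v => g t v ^ 2) x - _ = _
    rw [hgt']
  rw [hψ0, hψt] at hfin
  rw [hc] at hfin
  linarith
end Core3

/-- if `Ric(G) ≥ K` then
`P_t(f²) - (P_t f)² ≥ c_K(t) Γ(P_t f)` pointwise for `t ≥ 0`, where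
`c_K(t) = ∫₀ᵗ 2 e^{2Ks} ds`. -/
theorem variance_heat_estimate {V : Type*} [Fintype V] [DecidableEq V] (G : SimpleGraph V)
    (K : ℝ) (hric : RicGE G K) (f : V → ℝ) (t : ℝ) (ht : 0 ≤ t) (x : V) :
    (∫ s in (0 : ℝ)..t, 2 * Real.exp (2 * K * s))
        * gam G (heat G t f) (heat G t f) x
      ≤ heat G t (fun v => f v ^ 2) x - (heat G t f x) ^ 2 :=
  main_aux G hric f ht x
end
end
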